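/- arXiv:0706.3092 — 3 statements merged into one kernel-verified Lean document; each statement's English description precedes it below -/
import Mathlib

section
/- Let B be a symmetric bilinear form on an n-dimensional Euclidean vector space (V,g) and let s_k denote the k-th elementary symmetric function of the eigenvalues of the operator associated to B via g. Then s_k = (1/(k!)²) c^k(B^k), where c is the contraction map on double forms (the adjoint of exterior multiplication by the metric g). -/
open Finset

noncomputable section

abbrev E (n : ℕ) := EuclideanSpace ℝ (Fin n)

/-- `(p,q)`-double forms on `ℝⁿ` (modeled as real-valued functions of a `p`-tuple
and a `q`-tuple of vectors; genuine double forms are singled out by `DF.IsDF`). -/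
abbrev DF (n p q : ℕ) := (Fin p → E n) → (Fin q → E n) → ℝ

namespace DF

/-- the standard orthonormal basis of `ℝⁿ` -/
def e (n : ℕ) (i : Fin n) : E n := EuclideanSpace.single i 1

/-- cast a double form along equalities of bidegrees -/
def cDF {n p q p' q' : ℕ} (hp : p = p') (hq : q = q') (ω : DF n p q) : DF n p' q' :=
  fun x y => ω (fun i => x (Fin.cast hp i)) (fun j => y (Fin.cast hq j))

/-- the exterior product of double forms (extending the Kulkarni–Nomizu product) -/
def mul {n p q p' q' : ℕ} (ω : DF n p q) (θ : DF n p' q') : DF n (p + p') (q + q') :=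
  fun x y =>
    ((p.factorial * p'.factorial * q.factorial * q'.factorial : ℕ) : ℝ)⁻¹ *
      ∑ σ : Equiv.Perm (Fin (p + p')), ∑ τ : Equiv.Perm (Fin (q + q')),
        ((Equiv.Perm.sign σ : ℤ) : ℝ) * ((Equiv.Perm.sign τ : ℤ) : ℝ) *
          (ω (fun i => x (σ (Fin.castAdd p' i))) (fun j => y (τ (Fin.castAdd q' j))) *
           θ (fun i => x (σ (Fin.natAdd p i))) (fun j => y (τ (Fin.natAdd q j))))

/-- the bilinear form of the metric, as a `(1,1)`-double form -/
def gDF (n : ℕ) : DF n 1 1 := fun x y => @inner ℝ _ _ (x 0) (y 0)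

/-- a bilinear form as a `(1,1)`-double form -/
def ofBilin {n : ℕ} (B : E n →ₗ[ℝ] E n →ₗ[ℝ] ℝ) : DF n 1 1 := fun x y => B (x 0) (y 0)

/-- the `k`-th exterior power `B^k` of a `(1,1)`-double form -/
def pow1 {n : ℕ} (B : DF n 1 1) : (k : ℕ) → DF n k k
  | 0 => fun _ _ => 1
  | (k + 1) => cDF (Nat.add_comm 1 k) (Nat.add_comm 1 k) (mul B (pow1 B k))

/-- the `k`-th exterior power `R^k` of a `(2,2)`-double form -/
def pow2 {n : ℕ} (R : DF n 2 2) : (k : ℕ) → DF n (2 * k) (2 * k)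
  | 0 => fun _ _ => 1
  | (k + 1) => cDF (by omega) (by omega) (mul R (pow2 R k))

/-- the `m`-fold contraction `c^m ω` -/
def contr {n : ℕ} (m p q : ℕ) (ω : DF n (m + p) (m + q)) : DF n p q :=
  fun x y => ∑ I : Fin m → Fin n,
    ω (Fin.append (fun i => e n (I i)) x) (Fin.append (fun i => e n (I i)) y)

/-- the scalar value of a `(0,0)`-double form -/
def scal {n : ℕ} (ω : DF n 0 0) : ℝ := ω (fun i => i.elim0) (fun i => i.elim0)

/-- the natural inner product of two `(p,q)`-double forms -/
def innerDF {n p q : ℕ} (ω θ : DF n p q) : ℝ :=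
  ((p.factorial * q.factorial : ℕ) : ℝ)⁻¹ *
    ∑ I : Fin p → Fin n, ∑ J : Fin q → Fin n,
      ω (fun i => e n (I i)) (fun j => e n (J j)) *
        θ (fun i => e n (I i)) (fun j => e n (J j))

open Classical in
/-- the sign of the concatenation of two index tuples, as a permutation of `Fin n`
(zero if it is not a permutation) -/
def epsSgn {n a b : ℕ} (I : Fin a → Fin n) (K : Fin b → Fin n) : ℝ :=
  if h : a + b = n then
    if hb : Function.Bijective (fun i => Fin.append I K (Fin.cast h.symm i)) then
      ((Equiv.Perm.sign (Equiv.ofBijective _ hb) : ℤ) : ℝ)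
    else 0
  else 0

/-- the generalized Hodge star operator on double forms,
`(*ω)(·,·) = (−1)^{(p+q)(n−p−q)} ω(*·,*·)` -/
def star {n p q : ℕ} (ω : DF n p q) : DF n (n - p) (n - q) :=
  fun x y =>
    ((-1 : ℝ) ^ (((p + q : ℕ) : ℤ) * ((n : ℤ) - (p : ℤ) - (q : ℤ)))) *
      (((p.factorial * q.factorial : ℕ) : ℝ)⁻¹ *
        ∑ I : Fin (n - p) → Fin n, ∑ J : Fin (n - q) → Fin n,
          (∏ i, @inner ℝ _ _ (e n (I i)) (x i)) * (∏ j, @inner ℝ _ _ (e n (J j)) (y j)) *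
            ∑ K : Fin p → Fin n, ∑ L : Fin q → Fin n,
              epsSgn I K * epsSgn J L * ω (fun i => e n (K i)) (fun j => e n (L j)))

/-- a function of a `p`-tuple of vectors is an (alternating multilinear) `p`-form -/
def IsAlt {n p : ℕ} (f : (Fin p → E n) → ℝ) : Prop :=
  ∃ A : AlternatingMap ℝ (E n) ℝ (Fin p), ∀ x, A x = f x

/-- `ω` is a genuine double form: alternating multilinear in each block of arguments -/
def IsDF {n p q : ℕ} (ω : DF n p q) : Prop :=
  (∀ y, IsAlt fun x => ω x y) ∧ (∀ x, IsAlt fun y => ω x y)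

/-- the first Bianchi identity for a `(p+1,p+1)`-double form -/
def FirstBianchi {n p : ℕ} (ω : DF n (p + 1) (p + 1)) : Prop :=
  ∀ (x : Fin (p + 2) → E n) (y : Fin p → E n),
    ∑ i : Fin (p + 2), ((-1 : ℝ) ^ (i : ℕ)) *
      ω (fun j => x (i.succAbove j)) (Fin.cons (x i) y) = 0

/-- the `k`-th elementary symmetric function of `μ₁, …, μₙ` -/
def esymm (n k : ℕ) (μ : Fin n → ℝ) : ℝ :=
  ∑ s ∈ Finset.powersetCard k (Finset.univ : Finset (Fin n)), ∏ i ∈ s, μ i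

end DF

open Equiv Equiv.Perm

def sg {m : ℕ} (σ : Equiv.Perm (Fin m)) : ℝ := ((Equiv.Perm.sign σ : ℤ) : ℝ)

lemma sg_sq {m : ℕ} (σ : Perm (Fin m)) : sg σ * sg σ = 1 := by
  unfold sg
  rcases Int.units_eq_one_or (Equiv.Perm.sign σ) with h | h <;> rw [h] <;> norm_num

lemma sg_mul {m : ℕ} (σ τ : Perm (Fin m)) : sg (σ * τ) = sg σ * sg τ := by
  unfold sg
  rw [map_mul]
  push_cast
  rfl

lemma sg_permCongr {a b : ℕ} (c : Fin a ≃ Fin b) (σ : Perm (Fin a)) :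
    sg (Equiv.permCongr c σ) = sg σ := by
  unfold sg
  rw [Equiv.Perm.sign_permCongr]

def extP {k : ℕ} (α : Perm (Fin k)) : Perm (Fin (k+1)) := Equiv.Perm.decomposeFin.symm (0, α)

lemma extP_zero {k : ℕ} (α : Perm (Fin k)) : extP α 0 = 0 :=
  Equiv.Perm.decomposeFin_symm_apply_zero 0 α

lemma extP_succ {k : ℕ} (α : Perm (Fin k)) (i : Fin k) : extP α i.succ = (α i).succ := by
  rw [extP, Equiv.Perm.decomposeFin_symm_apply_succ, Equiv.swap_self]
  rfl

lemma sg_extP {k : ℕ} (α : Perm (Fin k)) : sg (extP α) = sg α := by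
  unfold sg extP
  rw [Equiv.Perm.decomposeFin.symm_sign]
  simp

lemma absorb {k : ℕ} (φ : Fin (k+1) → (Fin k → Fin (k+1)) → ℝ) :
    ∑ σ : Perm (Fin (k+1)), ∑ α : Perm (Fin k),
      sg σ * sg α * φ (σ 0) (fun i => σ ((α i).succ))
    = (k.factorial : ℝ) * ∑ σ : Perm (Fin (k+1)), sg σ * φ (σ 0) (fun i => σ i.succ) := by
  rw [Finset.sum_comm]
  have h : ∀ α : Perm (Fin k),
      ∑ σ : Perm (Fin (k+1)), sg σ * sg α * φ (σ 0) (fun i => σ ((α i).succ))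
      = ∑ σ : Perm (Fin (k+1)), sg σ * φ (σ 0) (fun i => σ i.succ) := by
    intro α
    refine Fintype.sum_equiv (Equiv.mulRight (extP α)) _ _ ?_
    intro σ
    rw [Equiv.coe_mulRight, sg_mul, sg_extP]
    have h0 : (σ * extP α) 0 = σ 0 := by rw [Equiv.Perm.mul_apply, extP_zero]
    have hs : ∀ i : Fin k, (σ * extP α) i.succ = σ ((α i).succ) := by
      intro i; rw [Equiv.Perm.mul_apply, extP_succ]
    rw [h0]
    simp only [hs]
  rw [Finset.sum_congr rfl fun α _ => h α]
  rw [Finset.sum_const, Finset.card_univ, Fintype.card_perm, Fintype.card_fin, nsmul_eq_mul]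

lemma pow1_apply {n : ℕ} (B : E n →ₗ[ℝ] E n →ₗ[ℝ] ℝ) (k : ℕ) :
    ∀ (x y : Fin k → E n),
      DF.pow1 (DF.ofBilin B) k x y =
        ∑ σ : Perm (Fin k), ∑ τ : Perm (Fin k),
          sg σ * sg τ * ∏ i, B (x (σ i)) (y (τ i)) := by
  induction k with
  | zero =>
    intro x y
    simp [DF.pow1, sg]
  | succ k ih =>
    intro x y
    simp only [DF.pow1, DF.cDF, DF.mul, DF.ofBilin]
    simp only [ih]
    have hc : (1 + k) = (k + 1) := Nat.add_comm 1 k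
    set c : Fin (1+k) ≃ Fin (k+1) := finCongr hc with hcdef
    have hp0 : ∀ σ : Perm (Fin (1+k)),
        (Equiv.permCongr c σ) (0 : Fin (k+1)) = Fin.cast hc (σ (Fin.castAdd k 0)) := by
      intro σ
      have h0 : c.symm (0 : Fin (k+1)) = Fin.castAdd k 0 := by
        apply c.injective; apply Fin.ext; simp [hcdef]
      rw [Equiv.permCongr_apply, h0]
      rfl
    have hps : ∀ (σ : Perm (Fin (1+k))) (i : Fin k),
        (Equiv.permCongr c σ) i.succ = Fin.cast hc (σ (Fin.natAdd 1 i)) := by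
      intro σ i
      have h0 : c.symm i.succ = Fin.natAdd 1 i := by
        apply c.injective; apply Fin.ext; simp [hcdef]
      rw [Equiv.permCongr_apply, h0]
      rfl
    have hfac : (Nat.factorial k : ℝ) ≠ 0 := Nat.cast_ne_zero.2 (Nat.factorial_ne_zero k)
    exact calc
      ((Nat.factorial 1 * k.factorial * Nat.factorial 1 * k.factorial : ℕ) : ℝ)⁻¹ *
          ∑ σ : Perm (Fin (1 + k)), ∑ τ : Perm (Fin (1 + k)),
            sg σ * sg τ *
              (B (x (Fin.cast hc (σ (Fin.castAdd k 0)))) (y (Fin.cast hc (τ (Fin.castAdd k 0)))) *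
                ∑ α : Perm (Fin k), ∑ β : Perm (Fin k),
                  sg α * sg β * ∏ i, B (x (Fin.cast hc (σ (Fin.natAdd 1 (α i)))))
                    (y (Fin.cast hc (τ (Fin.natAdd 1 (β i))))))
        = ((Nat.factorial 1 * k.factorial * Nat.factorial 1 * k.factorial : ℕ) : ℝ)⁻¹ *
          ∑ σ : Perm (Fin (k + 1)), ∑ τ : Perm (Fin (k + 1)),
            sg σ * sg τ *
              (B (x (σ 0)) (y (τ 0)) *
                ∑ α : Perm (Fin k), ∑ β : Perm (Fin k),
                  sg α * sg β * ∏ i, B (x (σ ((α i).succ))) (y (τ ((β i).succ)))) := by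
          refine congrArg _ ?_
          refine Fintype.sum_equiv (Equiv.permCongr c) _ _ fun σ => ?_
          refine Fintype.sum_equiv (Equiv.permCongr c) _ _ fun τ => ?_
          rw [sg_permCongr, sg_permCongr, hp0 σ, hp0 τ]
          simp only [hps]
      _ = ((Nat.factorial 1 * k.factorial * Nat.factorial 1 * k.factorial : ℕ) : ℝ)⁻¹ *
          ∑ σ : Perm (Fin (k + 1)), ∑ α : Perm (Fin k),
            sg σ * sg α *
              ∑ τ : Perm (Fin (k+1)), ∑ β : Perm (Fin k),
                sg τ * sg β *
                  (B (x (σ 0)) (y (τ 0)) *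
                    ∏ i, B (x (σ ((α i).succ))) (y (τ ((β i).succ)))) := by
          refine congrArg _ ?_
          refine Finset.sum_congr rfl fun σ _ => ?_
          simp only [Finset.mul_sum]
          rw [Finset.sum_comm]
          refine Finset.sum_congr rfl fun α _ => ?_
          refine Finset.sum_congr rfl fun τ _ => ?_
          refine Finset.sum_congr rfl fun β _ => ?_
          ring
      _ = ((Nat.factorial 1 * k.factorial * Nat.factorial 1 * k.factorial : ℕ) : ℝ)⁻¹ *
          ((k.factorial : ℝ) * ∑ σ : Perm (Fin (k + 1)),
            sg σ * ∑ τ : Perm (Fin (k+1)), ∑ β : Perm (Fin k),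
                sg τ * sg β *
                  (B (x (σ 0)) (y (τ 0)) *
                    ∏ i : Fin k, B (x (σ i.succ)) (y (τ ((β i).succ))))) := by
          exact congrArg _ (absorb (fun s0 sf =>
            ∑ τ : Perm (Fin (k+1)), ∑ β : Perm (Fin k),
              sg τ * sg β *
                (B (x s0) (y (τ 0)) * ∏ i : Fin k, B (x (sf i)) (y (τ ((β i).succ))))))
      _ = ((Nat.factorial 1 * k.factorial * Nat.factorial 1 * k.factorial : ℕ) : ℝ)⁻¹ *
          ((k.factorial : ℝ) * ∑ σ : Perm (Fin (k + 1)),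
            sg σ * ((k.factorial : ℝ) * ∑ τ : Perm (Fin (k+1)),
              sg τ * (B (x (σ 0)) (y (τ 0)) * ∏ i : Fin k, B (x (σ i.succ)) (y (τ i.succ))))) := by
          refine congrArg _ (congrArg _ (Finset.sum_congr rfl fun σ _ => ?_))
          refine congrArg _ ?_
          exact absorb (fun t0 tf => B (x (σ 0)) (y t0) * ∏ i : Fin k, B (x (σ i.succ)) (y (tf i)))
      _ = ∑ σ : Perm (Fin (k+1)), ∑ τ : Perm (Fin (k+1)),
            sg σ * sg τ * ∏ i : Fin (k+1), B (x (σ i)) (y (τ i)) := by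
          simp only [Fin.prod_univ_succ, Finset.mul_sum]
          refine Finset.sum_congr rfl fun σ _ => ?_
          refine Finset.sum_congr rfl fun τ _ => ?_
          rw [Nat.cast_mul, Nat.cast_mul, Nat.cast_mul, Nat.factorial_one]
          push_cast
          field_simp

lemma sum_perm_pair_eq_det {k : ℕ} (C : Fin k → Fin k → ℝ) :
    ∑ σ : Perm (Fin k), ∑ τ : Perm (Fin k), sg σ * sg τ * ∏ i, C (σ i) (τ i)
      = (k.factorial : ℝ) * (Matrix.of C).det := by
  have hdet : ∑ ρ : Perm (Fin k), sg ρ * ∏ i, C i (ρ i) = (Matrix.of C).det := by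
    rw [← Matrix.det_transpose, Matrix.det_apply']
    exact Finset.sum_congr rfl fun ρ _ => rfl
  have h1 : ∀ σ : Perm (Fin k),
      ∑ τ : Perm (Fin k), sg σ * sg τ * ∏ i, C (σ i) (τ i)
      = ∑ ρ : Perm (Fin k), sg ρ * ∏ i, C i (ρ i) := by
    intro σ
    refine (Fintype.sum_equiv (Equiv.mulRight σ) _ _ ?_).symm
    intro ρ
    have h2 : ∏ i, C (σ i) ((ρ * σ) i) = ∏ i, C i (ρ i) := by
      simpa using Equiv.prod_comp σ (fun j => C j (ρ j))
    rw [Equiv.coe_mulRight, sg_mul, h2]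
    linear_combination (-(sg ρ * ∏ i, C i (ρ i))) * sg_sq σ
  rw [Finset.sum_congr rfl fun σ _ => h1 σ, Finset.sum_const, hdet]
  simp [Fintype.card_perm, mul_comm]

lemma parseval {n : ℕ} (u v : E n) :
    ∑ a : Fin n, (inner ℝ u (DF.e n a) : ℝ) * (inner ℝ v (DF.e n a) : ℝ) = (inner ℝ u v : ℝ) := by
  simp [DF.e, EuclideanSpace.inner_single_right, PiLp.inner_apply, RCLike.inner_apply,
    mul_comm]

lemma Bexp {n : ℕ} (B : E n →ₗ[ℝ] E n →ₗ[ℝ] ℝ)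
    (e : OrthonormalBasis (Fin n) ℝ (E n)) (μ : Fin n → ℝ)
    (hdiag : ∀ i j, B (e i) (e j) = if i = j then μ i else 0) (u v : E n) :
    B u v = ∑ c, (inner ℝ (e c) u : ℝ) * ((inner ℝ (e c) v : ℝ) * μ c) := by
  conv_lhs => rw [← e.sum_repr u, ← e.sum_repr v]
  simp only [map_sum, map_smul, LinearMap.sum_apply, LinearMap.smul_apply, smul_eq_mul,
    hdiag, mul_ite, mul_zero]
  refine Finset.sum_congr rfl fun c _ => ?_
  rw [Finset.sum_ite_eq' Finset.univ c (fun d => e.repr u d * μ d)]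
  simp only [Finset.mem_univ, if_true, OrthonormalBasis.repr_apply_apply]
  ring

lemma gram {n k : ℕ} (e : OrthonormalBasis (Fin n) ℝ (E n)) (F G : Fin k → Fin n) :
    ∑ I : Fin k → Fin n,
      ∏ j, ((inner ℝ (e (F j)) (DF.e n (I j)) : ℝ) * (inner ℝ (e (G j)) (DF.e n (I j)) : ℝ))
    = ∏ j, (if F j = G j then (1:ℝ) else 0) := by
  have h := Finset.prod_univ_sum (fun _ : Fin k => (Finset.univ : Finset (Fin n)))
      (fun j a => (inner ℝ (e (F j)) (DF.e n a) : ℝ) * (inner ℝ (e (G j)) (DF.e n a) : ℝ))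
  rw [Fintype.piFinset_univ] at h
  rw [← h]
  refine Finset.prod_congr rfl fun j _ => ?_
  rw [parseval]
  exact orthonormal_iff_ite.mp e.orthonormal (F j) (G j)

lemma basis_change {n k : ℕ} (B : E n →ₗ[ℝ] E n →ₗ[ℝ] ℝ)
    (e : OrthonormalBasis (Fin n) ℝ (E n)) (μ : Fin n → ℝ)
    (hdiag : ∀ i j, B (e i) (e j) = if i = j then μ i else 0) :
    ∑ I : Fin k → Fin n, ∑ ρ : Perm (Fin k), sg ρ * ∏ j, B (DF.e n (I (ρ j))) (DF.e n (I j))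
    = ∑ I : Fin k → Fin n, ∑ ρ : Perm (Fin k), sg ρ *
        ∏ j, (if I (ρ j) = I j then μ (I j) else 0) := by
  have hsplit : ∀ (c : Prop) [Decidable c] (m : ℝ), (if c then m else 0) = (if c then (1:ℝ) else 0) * m := by
    intro c _ m; split <;> simp
  calc
    ∑ I : Fin k → Fin n, ∑ ρ : Perm (Fin k), sg ρ * ∏ j, B (DF.e n (I (ρ j))) (DF.e n (I j))
      = ∑ ρ : Perm (Fin k), ∑ J : Fin k → Fin n, sg ρ *
          ((∏ j, (if J (ρ⁻¹ j) = J j then (1:ℝ) else 0)) * ∏ j, μ (J j)) := by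
        rw [Finset.sum_comm]
        refine Finset.sum_congr rfl fun ρ _ => ?_
        have hI : ∀ I : Fin k → Fin n,
            ∏ j, B (DF.e n (I (ρ j))) (DF.e n (I j))
            = ∑ J : Fin k → Fin n, ∏ j,
                ((inner ℝ (e (J j)) (DF.e n (I (ρ j))) : ℝ) *
                  ((inner ℝ (e (J j)) (DF.e n (I j)) : ℝ) * μ (J j))) := by
          intro I
          have h := Finset.prod_univ_sum (fun _ : Fin k => (Finset.univ : Finset (Fin n)))
            (fun j c => (inner ℝ (e c) (DF.e n (I (ρ j))) : ℝ) *
              ((inner ℝ (e c) (DF.e n (I j)) : ℝ) * μ c))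
          rw [Fintype.piFinset_univ] at h
          rw [← h]
          exact Finset.prod_congr rfl fun j _ => Bexp B e μ hdiag _ _
        simp only [hI, Finset.mul_sum]
        rw [Finset.sum_comm]
        refine Finset.sum_congr rfl fun J _ => ?_
        have hprod : ∀ I : Fin k → Fin n,
            ∏ j, ((inner ℝ (e (J j)) (DF.e n (I (ρ j))) : ℝ) *
              ((inner ℝ (e (J j)) (DF.e n (I j)) : ℝ) * μ (J j)))
            = (∏ j, ((inner ℝ (e (J (ρ⁻¹ j))) (DF.e n (I j)) : ℝ) *
                (inner ℝ (e (J j)) (DF.e n (I j)) : ℝ))) * ∏ j, μ (J j) := by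
          intro I
          calc
            ∏ j, ((inner ℝ (e (J j)) (DF.e n (I (ρ j))) : ℝ) *
                ((inner ℝ (e (J j)) (DF.e n (I j)) : ℝ) * μ (J j)))
              = (∏ j, (inner ℝ (e (J j)) (DF.e n (I (ρ j))) : ℝ)) *
                  ((∏ j, (inner ℝ (e (J j)) (DF.e n (I j)) : ℝ)) * ∏ j, μ (J j)) := by
                rw [Finset.prod_mul_distrib, Finset.prod_mul_distrib]
            _ = (∏ j, (inner ℝ (e (J (ρ⁻¹ j))) (DF.e n (I j)) : ℝ)) *
                  ((∏ j, (inner ℝ (e (J j)) (DF.e n (I j)) : ℝ)) * ∏ j, μ (J j)) := by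
                congr 1
                rw [← Equiv.prod_comp ρ (fun j => (inner ℝ (e (J (ρ⁻¹ j))) (DF.e n (I j)) : ℝ))]
                refine Finset.prod_congr rfl fun j _ => ?_
                rw [Equiv.Perm.inv_def, Equiv.symm_apply_apply]
            _ = (∏ j, ((inner ℝ (e (J (ρ⁻¹ j))) (DF.e n (I j)) : ℝ) *
                  (inner ℝ (e (J j)) (DF.e n (I j)) : ℝ))) * ∏ j, μ (J j) := by
                rw [Finset.prod_mul_distrib]
                ring
        simp only [hprod]
        simp only [← mul_assoc]
        rw [← Finset.sum_mul, ← Finset.mul_sum, gram e (fun j => J (ρ⁻¹ j)) J]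
    _ = ∑ ρ : Perm (Fin k), ∑ J : Fin k → Fin n, sg ρ⁻¹ *
          ((∏ j, (if J ((ρ⁻¹)⁻¹ j) = J j then (1:ℝ) else 0)) * ∏ j, μ (J j)) := by
        refine Fintype.sum_equiv (Equiv.inv (Perm (Fin k))) _ _ fun ρ => ?_
        rfl
    _ = ∑ I : Fin k → Fin n, ∑ ρ : Perm (Fin k), sg ρ *
        ∏ j, (if I (ρ j) = I j then μ (I j) else 0) := by
        rw [Finset.sum_comm]
        refine Finset.sum_congr rfl fun J _ => ?_
        refine Finset.sum_congr rfl fun ρ _ => ?_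
        rw [inv_inv]
        have : sg ρ⁻¹ = sg ρ := by unfold sg; rw [Equiv.Perm.sign_inv]
        rw [this]
        congr 1
        rw [← Finset.prod_mul_distrib]
        refine Finset.prod_congr rfl fun j _ => ?_
        by_cases h : J (ρ j) = J j <;> simp [h]

open Classical in
lemma card_fiber {n k : ℕ} (y : Finset (Fin n)) (hy : y.card = k) :
    ((Finset.univ.filter (fun I : Fin k → Fin n => Function.Injective I)).filter
      (fun I => Finset.image I Finset.univ = y)).card = k.factorial := by
  have hcardy : Fintype.card (↥y) = k := by rw [Fintype.card_coe, hy]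
  have hcard : ((Finset.univ : Finset (Fin k ≃ ↥y))).card = k.factorial := by
    rw [Finset.card_univ, Fintype.card_equiv ((Fintype.equivFinOfCardEq hcardy).symm),
      Fintype.card_fin]
  rw [← hcard]
  refine Finset.card_bij' (fun I hI => ?_) (fun E _ => fun j => (E j : Fin n)) ?_ ?_ ?_ ?_
  · -- map fiber → equivs
    simp only [Finset.mem_filter, Finset.mem_univ, true_and] at hI
    refine Equiv.ofBijective (fun j => (⟨I j, by rw [← hI.2]; exact Finset.mem_image_of_mem I (Finset.mem_univ j)⟩ : ↥y)) ?_
    rw [Fintype.bijective_iff_injective_and_card]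
    constructor
    · intro a b hab
      exact hI.1 (congrArg Subtype.val hab)
    · rw [hcardy, Fintype.card_fin]
  · intro I hI
    exact Finset.mem_univ _
  · intro E _
    simp only [Finset.mem_filter, Finset.mem_univ, true_and]
    constructor
    · exact Subtype.coe_injective.comp E.injective
    · apply Finset.ext
      intro a
      simp only [Finset.mem_image, Finset.mem_univ, true_and]
      constructor
      · rintro ⟨j, rfl⟩; exact (E j).2
      · intro ha; exact ⟨E.symm ⟨a, ha⟩, by simp⟩
  · intro I hI
    rfl
  · intro E hE
    apply Equiv.ext
    intro j
    apply Subtype.ext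
    rfl

open Classical in
lemma sum_inj {n k : ℕ} (μ : Fin n → ℝ) :
    ∑ I ∈ Finset.univ.filter (fun I : Fin k → Fin n => Function.Injective I),
      ∏ j, μ (I j) = (k.factorial : ℝ) * DF.esymm n k μ := by
  rw [DF.esymm, Finset.mul_sum]
  rw [← Finset.sum_fiberwise_of_maps_to (g := fun I : Fin k → Fin n => Finset.image I Finset.univ)
    (t := Finset.powersetCard k Finset.univ) ?_]
  · refine Finset.sum_congr rfl fun y hy => ?_
    obtain ⟨-, hycard⟩ := Finset.mem_powersetCard.mp hy
    have hval : ∀ I ∈ (Finset.univ.filter (fun I : Fin k → Fin n => Function.Injective I)).filter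
        (fun I => Finset.image I Finset.univ = y), ∏ j, μ (I j) = ∏ i ∈ y, μ i := by
      intro I hI
      simp only [Finset.mem_filter, Finset.mem_univ, true_and] at hI
      rw [← hI.2, Finset.prod_image (fun a _ b _ hab => hI.1 hab)]
    rw [Finset.sum_congr rfl hval, Finset.sum_const, card_fiber y hycard, nsmul_eq_mul]
  · intro I hI
    simp only [Finset.mem_filter, Finset.mem_univ, true_and] at hI
    rw [Finset.mem_powersetCard]
    exact ⟨Finset.subset_univ _, by rw [Finset.card_image_of_injective _ hI, Finset.card_univ, Fintype.card_fin]⟩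

lemma scal_contr {n k : ℕ} (B : E n →ₗ[ℝ] E n →ₗ[ℝ] ℝ) (h1 h2 : k = k + 0) :
    DF.scal (DF.contr k 0 0 (DF.cDF h1 h2 (DF.pow1 (DF.ofBilin B) k)))
      = ∑ I : Fin k → Fin n,
          DF.pow1 (DF.ofBilin B) k (fun i => DF.e n (I i)) (fun i => DF.e n (I i)) := by
  unfold DF.scal DF.contr DF.cDF
  refine Finset.sum_congr rfl fun I _ => ?_
  congr 1 <;> funext i <;>
    rw [show Fin.cast h1 i = Fin.castAdd 0 i from Fin.ext rfl, Fin.append_left]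


/-- `s_k = (1/(k!)²) c^k (B^k)` for a symmetric bilinear form `B` with
eigenvalues `μ` (w.r.t. an orthonormal eigenbasis `e`). -/
theorem esymm_eq_contr_pow {n k : ℕ} (hk : k ≤ n)
    (B : E n →ₗ[ℝ] E n →ₗ[ℝ] ℝ) (hB : ∀ x y, B x y = B y x)
    (e : OrthonormalBasis (Fin n) ℝ (E n)) (μ : Fin n → ℝ)
    (hdiag : ∀ i j, B (e i) (e j) = if i = j then μ i else 0) :
    DF.esymm n k μ =
      ((k.factorial * k.factorial : ℕ) : ℝ)⁻¹ *
        DF.scal (DF.contr k 0 0 (DF.cDF (by omega) (by omega)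
          (DF.pow1 (DF.ofBilin B) k))) := by
  classical
  have hfac : (k.factorial : ℝ) ≠ 0 := Nat.cast_ne_zero.2 (Nat.factorial_ne_zero k)
  have hmain : DF.scal (DF.contr k 0 0 (DF.cDF (by omega : k = k + 0) (by omega : k = k + 0)
      (DF.pow1 (DF.ofBilin B) k)))
      = (k.factorial : ℝ) * ((k.factorial : ℝ) * DF.esymm n k μ) := by
    rw [scal_contr]
    calc
      ∑ I : Fin k → Fin n,
          DF.pow1 (DF.ofBilin B) k (fun i => DF.e n (I i)) (fun i => DF.e n (I i))
        = ∑ I : Fin k → Fin n, (k.factorial : ℝ) *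
            (Matrix.of fun a b => B (DF.e n (I a)) (DF.e n (I b))).det := by
          refine Finset.sum_congr rfl fun I _ => ?_
          rw [pow1_apply B k]
          exact sum_perm_pair_eq_det (fun a b => B (DF.e n (I a)) (DF.e n (I b)))
      _ = (k.factorial : ℝ) * ∑ I : Fin k → Fin n,
            ∑ ρ : Perm (Fin k), sg ρ * ∏ j, B (DF.e n (I (ρ j))) (DF.e n (I j)) := by
          rw [← Finset.mul_sum]
          refine congrArg _ (Finset.sum_congr rfl fun I _ => ?_)
          rw [Matrix.det_apply']
          rfl
      _ = (k.factorial : ℝ) * ∑ I : Fin k → Fin n,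
            ∑ ρ : Perm (Fin k), sg ρ * ∏ j, (if I (ρ j) = I j then μ (I j) else 0) := by
          rw [basis_change B e μ hdiag]
      _ = (k.factorial : ℝ) * ∑ I : Fin k → Fin n,
            (Matrix.of fun a b => if I a = I b then μ (I b) else 0).det := by
          refine congrArg _ (Finset.sum_congr rfl fun I _ => ?_)
          rw [Matrix.det_apply']
          rfl
      _ = (k.factorial : ℝ) * ∑ I ∈ Finset.univ.filter
            (fun I : Fin k → Fin n => Function.Injective I), ∏ j, μ (I j) := by
          refine congrArg _ ?_
          rw [← Finset.sum_filter_add_sum_filter_not Finset.univ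
            (fun I : Fin k → Fin n => Function.Injective I)]
          have h2 : ∑ I ∈ Finset.univ.filter
              (fun I : Fin k → Fin n => ¬ Function.Injective I),
              (Matrix.of fun a b => if I a = I b then μ (I b) else 0).det = 0 := by
            refine Finset.sum_eq_zero fun I hI => ?_
            simp only [Finset.mem_filter, Finset.mem_univ, true_and] at hI
            rw [Function.not_injective_iff] at hI
            obtain ⟨a, b, hab, hne⟩ := hI
            refine Matrix.det_zero_of_row_eq hne (funext fun l => ?_)
            simp only [Matrix.of_apply, hab]
          have h1 : ∀ I ∈ Finset.univ.filter
              (fun I : Fin k → Fin n => Function.Injective I),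
              (Matrix.of fun a b => if I a = I b then μ (I b) else 0).det = ∏ j, μ (I j) := by
            intro I hI
            simp only [Finset.mem_filter, Finset.mem_univ, true_and] at hI
            have : (Matrix.of fun a b => if I a = I b then μ (I b) else 0)
                = Matrix.diagonal (fun a => μ (I a)) := by
              ext a b
              by_cases h : a = b
              · subst h; simp [Matrix.diagonal]
              · have hne : ¬ I a = I b := fun hc => h (hI hc)
                simp [Matrix.diagonal, h, hne]
            rw [this, Matrix.det_diagonal]
          rw [h2, add_zero, Finset.sum_congr rfl h1]
      _ = (k.factorial : ℝ) * ((k.factorial : ℝ) * DF.esymm n k μ) := by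
          rw [sum_inj]
  rw [hmain]
  field_simp
  push_cast
  ring
end
end

section
/- Let (M,g) be a hypersurface of (n+1)-dimensional Euclidean space with second fundamental form B and Riemann curvature tensor R (viewed as a (2,2)-double form). Then B^{2k} = 2^k R^k for every k, and consequently the even elementary symmetric functions of the principal curvatures are intrinsic: s_{2k} = (2^k/((2k)!)²) c^{2k}(R^k). -/
open Finset

noncomputable section

namespace DF

def Dfun {n : ℕ} (b : E n → E n → ℝ) (m : ℕ) : DF n m m :=
  fun x y => ∑ π : Equiv.Perm (Fin m), ((Equiv.Perm.sign π : ℤ) : ℝ) * ∏ i, b (x i) (y (π i))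

def blk {a m : ℕ} (α : Equiv.Perm (Fin a)) (π : Equiv.Perm (Fin m)) :
    Equiv.Perm (Fin (a + m)) := finSumFinEquiv.permCongr (α.sumCongr π)

@[simp] lemma blk_castAdd {a m : ℕ} (α : Equiv.Perm (Fin a)) (π : Equiv.Perm (Fin m)) (i : Fin a) :
    blk α π (Fin.castAdd m i) = Fin.castAdd m (α i) := by
  simp [blk, Equiv.permCongr_apply]

@[simp] lemma blk_natAdd {a m : ℕ} (α : Equiv.Perm (Fin a)) (π : Equiv.Perm (Fin m)) (i : Fin m) :
    blk α π (Fin.natAdd a i) = Fin.natAdd a (π i) := by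
  simp [blk, Equiv.permCongr_apply]

@[simp] lemma sign_blk {a m : ℕ} (α : Equiv.Perm (Fin a)) (π : Equiv.Perm (Fin m)) :
    Equiv.Perm.sign (blk α π) = Equiv.Perm.sign α * Equiv.Perm.sign π := by
  simp [blk, Equiv.Perm.sign_permCongr, Equiv.Perm.sign_sumCongr]

lemma fold {m : ℕ} (g : Fin m → Fin m → ℝ) :
    ∑ σ : Equiv.Perm (Fin m), ∑ τ : Equiv.Perm (Fin m),
      ((Equiv.Perm.sign σ : ℤ) : ℝ) * ((Equiv.Perm.sign τ : ℤ) : ℝ) * ∏ j, g (σ j) (τ j)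
    = (m.factorial : ℝ) *
      ∑ ρ : Equiv.Perm (Fin m), ((Equiv.Perm.sign ρ : ℤ) : ℝ) * ∏ j, g j (ρ j) := by
  have key : ∀ σ : Equiv.Perm (Fin m),
      ∑ τ : Equiv.Perm (Fin m),
        ((Equiv.Perm.sign σ : ℤ) : ℝ) * ((Equiv.Perm.sign τ : ℤ) : ℝ) * ∏ j, g (σ j) (τ j)
      = ∑ ρ : Equiv.Perm (Fin m), ((Equiv.Perm.sign ρ : ℤ) : ℝ) * ∏ j, g j (ρ j) := by
    intro σ
    have h1 : ∀ τ : Equiv.Perm (Fin m), ∏ j, g (σ j) (τ j) = ∏ j, g j (τ (σ⁻¹ j)) := by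
      intro τ
      have := Equiv.prod_comp σ (fun j => g j (τ (σ⁻¹ j)))
      simpa using this
    simp only [h1]
    rw [← Equiv.sum_comp (Equiv.mulRight σ⁻¹)
      (fun τ => ((Equiv.Perm.sign τ : ℤ) : ℝ) * ∏ j, g j (τ j))]
    apply Finset.sum_congr rfl
    intro τ _
    have hs : ((Equiv.Perm.sign σ : ℤ) : ℝ) * ((Equiv.Perm.sign τ : ℤ) : ℝ)
        = ((Equiv.Perm.sign (Equiv.mulRight σ⁻¹ τ) : ℤ) : ℝ) := by
      simp only [Equiv.coe_mulRight, Equiv.Perm.sign_mul, Equiv.Perm.sign_inv, Units.val_mul,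
        Int.cast_mul]
      ring
    rw [← hs]
    rfl
  rw [Finset.sum_congr rfl (fun σ _ => key σ), Finset.sum_const, Finset.card_univ,
    Fintype.card_perm, Fintype.card_fin, nsmul_eq_mul]

lemma dcast {m m' : ℕ} (h : m = m') (g : Fin m' → Fin m' → ℝ) :
    ∑ ρ : Equiv.Perm (Fin m), ((Equiv.Perm.sign ρ : ℤ) : ℝ) *
        ∏ j, g (Fin.cast h j) (Fin.cast h (ρ j))
    = ∑ ρ : Equiv.Perm (Fin m'), ((Equiv.Perm.sign ρ : ℤ) : ℝ) * ∏ j, g j (ρ j) := by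
  subst h
  simp

lemma aux_alg {ι κ : Type*} [Fintype ι] [Fintype κ] (c1 c2 d : ℝ) (A : ι → ℝ) (B : κ → ℝ) :
    d * ((c1 * ∑ α, A α) * (c2 * ∑ π, B π)) = ∑ α, ∑ π, c1 * c2 * (d * (A α * B π)) := by
  have h : d * ((c1 * ∑ α, A α) * (c2 * ∑ π, B π))
      = (c1 * c2 * d) * ((∑ α, A α) * (∑ π, B π)) := by ring
  rw [h, Finset.sum_mul_sum, Finset.mul_sum]
  refine Finset.sum_congr rfl fun α _ => ?_
  rw [Finset.mul_sum]
  exact Finset.sum_congr rfl fun π _ => by ring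

lemma mul_Dfun {n a m : ℕ} (b : E n → E n → ℝ) (f : DF n a a) (g : DF n m m) (cf cg : ℝ)
    (hf : ∀ x y, f x y = cf * Dfun b a x y) (hg : ∀ x y, g x y = cg * Dfun b m x y)
    (x : Fin (a + m) → E n) (y : Fin (a + m) → E n) :
    mul f g x y =
      cf * cg * (((a + m).factorial : ℝ) / ((a.factorial : ℝ) * (m.factorial : ℝ))) *
        Dfun b (a + m) x y := by
  have hτsum : ∀ (X : Fin a → E n) (X' : Fin m → E n),
      ∑ τ : Equiv.Perm (Fin (a + m)), ((Equiv.Perm.sign τ : ℤ) : ℝ) *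
        ((cf * ∑ α : Equiv.Perm (Fin a), ((Equiv.Perm.sign α : ℤ) : ℝ) *
            ∏ i, b (X i) (y (τ (Fin.castAdd m (α i))))) *
         (cg * ∑ π : Equiv.Perm (Fin m), ((Equiv.Perm.sign π : ℤ) : ℝ) *
            ∏ i, b (X' i) (y (τ (Fin.natAdd a (π i)))))) =
      cf * cg * ((a.factorial : ℝ) * (m.factorial : ℝ)) *
        ∑ τ : Equiv.Perm (Fin (a + m)), ((Equiv.Perm.sign τ : ℤ) : ℝ) *
          ((∏ i, b (X i) (y (τ (Fin.castAdd m i)))) *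
           (∏ i, b (X' i) (y (τ (Fin.natAdd a i))))) := by
    intro X X'
    have step1 : ∀ τ : Equiv.Perm (Fin (a + m)),
        ((Equiv.Perm.sign τ : ℤ) : ℝ) *
          ((cf * ∑ α : Equiv.Perm (Fin a), ((Equiv.Perm.sign α : ℤ) : ℝ) *
              ∏ i, b (X i) (y (τ (Fin.castAdd m (α i))))) *
           (cg * ∑ π : Equiv.Perm (Fin m), ((Equiv.Perm.sign π : ℤ) : ℝ) *
              ∏ i, b (X' i) (y (τ (Fin.natAdd a (π i)))))) =
        ∑ α : Equiv.Perm (Fin a), ∑ π : Equiv.Perm (Fin m),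
          cf * cg * (((Equiv.Perm.sign τ : ℤ) : ℝ) *
            ((((Equiv.Perm.sign α : ℤ) : ℝ) * ∏ i, b (X i) (y (τ (Fin.castAdd m (α i))))) *
             (((Equiv.Perm.sign π : ℤ) : ℝ) * ∏ i, b (X' i) (y (τ (Fin.natAdd a (π i))))))) :=
      fun τ => aux_alg cf cg _ _ _
    simp only [step1]
    rw [Finset.sum_comm]
    rw [Finset.sum_congr rfl (fun α _ => Finset.sum_comm)]
    have step2 : ∀ (α : Equiv.Perm (Fin a)) (π : Equiv.Perm (Fin m)),
        ∑ τ : Equiv.Perm (Fin (a + m)),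
          cf * cg * (((Equiv.Perm.sign τ : ℤ) : ℝ) *
            ((((Equiv.Perm.sign α : ℤ) : ℝ) * ∏ i, b (X i) (y (τ (Fin.castAdd m (α i))))) *
             (((Equiv.Perm.sign π : ℤ) : ℝ) * ∏ i, b (X' i) (y (τ (Fin.natAdd a (π i))))))) =
        ∑ τ : Equiv.Perm (Fin (a + m)), cf * cg * (((Equiv.Perm.sign τ : ℤ) : ℝ) *
          ((∏ i, b (X i) (y (τ (Fin.castAdd m i)))) *
           (∏ i, b (X' i) (y (τ (Fin.natAdd a i)))))) := by
      intro α π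
      rw [← Equiv.sum_comp (Equiv.mulRight (blk α π))
        (fun τ => cf * cg * (((Equiv.Perm.sign τ : ℤ) : ℝ) *
          ((∏ i, b (X i) (y (τ (Fin.castAdd m i)))) *
           (∏ i, b (X' i) (y (τ (Fin.natAdd a i)))))))]
      apply Finset.sum_congr rfl
      intro τ _
      have e1 : ∀ i : Fin a, (Equiv.mulRight (blk α π) τ) (Fin.castAdd m i)
          = τ (Fin.castAdd m (α i)) := by
        intro i; simp [Equiv.coe_mulRight, Equiv.Perm.mul_apply]
      have e2 : ∀ i : Fin m, (Equiv.mulRight (blk α π) τ) (Fin.natAdd a i)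
          = τ (Fin.natAdd a (π i)) := by
        intro i; simp [Equiv.coe_mulRight, Equiv.Perm.mul_apply]
      have hs : ((Equiv.Perm.sign (Equiv.mulRight (blk α π) τ) : ℤ) : ℝ)
          = ((Equiv.Perm.sign τ : ℤ) : ℝ) * (((Equiv.Perm.sign α : ℤ) : ℝ) *
            ((Equiv.Perm.sign π : ℤ) : ℝ)) := by
        simp only [Equiv.coe_mulRight, Equiv.Perm.sign_mul, sign_blk, Units.val_mul, Int.cast_mul]
      simp only [e1, e2, hs]
      ring
    rw [Finset.sum_congr rfl (fun α _ => Finset.sum_congr rfl (fun π _ => step2 α π))]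
    simp only [Finset.sum_const, Finset.card_univ, Fintype.card_perm, Fintype.card_fin,
      nsmul_eq_mul, Finset.mul_sum]
    exact Finset.sum_congr rfl fun τ _ => by ring
  simp only [mul, hf, hg, Dfun]
  have outer : ∀ σ : Equiv.Perm (Fin (a + m)),
      ∑ τ : Equiv.Perm (Fin (a + m)),
        ((Equiv.Perm.sign σ : ℤ) : ℝ) * ((Equiv.Perm.sign τ : ℤ) : ℝ) *
        ((cf * ∑ α : Equiv.Perm (Fin a), ((Equiv.Perm.sign α : ℤ) : ℝ) *
            ∏ i, b (x (σ (Fin.castAdd m i))) (y (τ (Fin.castAdd m (α i))))) *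
         (cg * ∑ π : Equiv.Perm (Fin m), ((Equiv.Perm.sign π : ℤ) : ℝ) *
            ∏ i, b (x (σ (Fin.natAdd a i))) (y (τ (Fin.natAdd a (π i)))))) =
      cf * cg * ((a.factorial : ℝ) * (m.factorial : ℝ)) *
        ∑ τ : Equiv.Perm (Fin (a + m)),
          ((Equiv.Perm.sign σ : ℤ) : ℝ) * ((Equiv.Perm.sign τ : ℤ) : ℝ) *
            ∏ j, b (x (σ j)) (y (τ j)) := by
    intro σ
    have h1 : ∑ τ : Equiv.Perm (Fin (a + m)),
        ((Equiv.Perm.sign σ : ℤ) : ℝ) * ((Equiv.Perm.sign τ : ℤ) : ℝ) *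
        ((cf * ∑ α : Equiv.Perm (Fin a), ((Equiv.Perm.sign α : ℤ) : ℝ) *
            ∏ i, b (x (σ (Fin.castAdd m i))) (y (τ (Fin.castAdd m (α i))))) *
         (cg * ∑ π : Equiv.Perm (Fin m), ((Equiv.Perm.sign π : ℤ) : ℝ) *
            ∏ i, b (x (σ (Fin.natAdd a i))) (y (τ (Fin.natAdd a (π i)))))) =
        ((Equiv.Perm.sign σ : ℤ) : ℝ) *
          ∑ τ : Equiv.Perm (Fin (a + m)), ((Equiv.Perm.sign τ : ℤ) : ℝ) *
          ((cf * ∑ α : Equiv.Perm (Fin a), ((Equiv.Perm.sign α : ℤ) : ℝ) *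
              ∏ i, b (x (σ (Fin.castAdd m i))) (y (τ (Fin.castAdd m (α i))))) *
           (cg * ∑ π : Equiv.Perm (Fin m), ((Equiv.Perm.sign π : ℤ) : ℝ) *
              ∏ i, b (x (σ (Fin.natAdd a i))) (y (τ (Fin.natAdd a (π i)))))) := by
      rw [Finset.mul_sum]
      exact Finset.sum_congr rfl fun τ _ => by ring
    rw [h1, hτsum (fun i => x (σ (Fin.castAdd m i))) (fun i => x (σ (Fin.natAdd a i)))]
    have merge : ∀ τ : Equiv.Perm (Fin (a + m)),
        (∏ i, b (x (σ (Fin.castAdd m i))) (y (τ (Fin.castAdd m i)))) *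
          (∏ i, b (x (σ (Fin.natAdd a i))) (y (τ (Fin.natAdd a i)))) =
        ∏ j, b (x (σ j)) (y (τ j)) :=
      fun τ => (Fin.prod_univ_add (f := fun j => b (x (σ j)) (y (τ j)))).symm
    simp only [merge]
    rw [Finset.mul_sum, Finset.mul_sum, Finset.mul_sum]
    exact Finset.sum_congr rfl fun τ _ => by ring
  rw [Finset.sum_congr rfl (fun σ _ => outer σ)]
  have pull : ∑ σ : Equiv.Perm (Fin (a + m)),
      cf * cg * ((a.factorial : ℝ) * (m.factorial : ℝ)) *
        ∑ τ : Equiv.Perm (Fin (a + m)),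
          ((Equiv.Perm.sign σ : ℤ) : ℝ) * ((Equiv.Perm.sign τ : ℤ) : ℝ) *
            ∏ j, b (x (σ j)) (y (τ j)) =
      cf * cg * ((a.factorial : ℝ) * (m.factorial : ℝ)) *
        ∑ σ : Equiv.Perm (Fin (a + m)), ∑ τ : Equiv.Perm (Fin (a + m)),
          ((Equiv.Perm.sign σ : ℤ) : ℝ) * ((Equiv.Perm.sign τ : ℤ) : ℝ) *
            ∏ j, b (x (σ j)) (y (τ j)) := by
    rw [Finset.mul_sum]
  rw [pull, fold (fun p q => b (x p) (y q))]
  have ha : (a.factorial : ℝ) ≠ 0 := Nat.cast_ne_zero.mpr (Nat.factorial_ne_zero a)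
  have hm : (m.factorial : ℝ) ≠ 0 := Nat.cast_ne_zero.mpr (Nat.factorial_ne_zero m)
  push_cast
  field_simp

lemma pow1_eq {n : ℕ} (B : E n →ₗ[ℝ] E n →ₗ[ℝ] ℝ) :
    ∀ (m : ℕ) (x y : Fin m → E n),
      pow1 (ofBilin B) m x y = (m.factorial : ℝ) * Dfun (fun u v => B u v) m x y := by
  intro m
  induction m with
  | zero =>
    intro x y
    simp [pow1, Dfun]
  | succ k ih =>
    intro x y
    have hbase : ∀ (x y : Fin 1 → E n),
        ofBilin B x y = 1 * Dfun (fun u v => B u v) 1 x y := by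
      intro x y
      simp [ofBilin, Dfun]
    simp only [pow1, cDF]
    rw [mul_Dfun (fun u v => B u v) (ofBilin B) (pow1 (ofBilin B) k) 1 (k.factorial : ℝ)
      hbase ih]
    have hc : Dfun (fun u v => (B u) v) (1 + k)
          (fun i => x (Fin.cast (Nat.add_comm 1 k) i))
          (fun j => y (Fin.cast (Nat.add_comm 1 k) j))
        = Dfun (fun u v => (B u) v) (k + 1) x y :=
      dcast (Nat.add_comm 1 k) (fun p q => (B (x p)) (y q))
    rw [hc]
    have h1 : ((1 + k).factorial : ℝ) = ((k + 1).factorial : ℝ) := by rw [Nat.add_comm]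
    have hk : (k.factorial : ℝ) ≠ 0 := Nat.cast_ne_zero.mpr (Nat.factorial_ne_zero k)
    rw [h1]
    simp [Nat.factorial_one]
    field_simp
    simp

lemma pow2_eq {n : ℕ} (b : E n → E n → ℝ) (R : DF n 2 2) (hR : ∀ x y, R x y = Dfun b 2 x y) :
    ∀ (k : ℕ) (x y : Fin (2 * k) → E n),
      pow2 R k x y = (((2 * k).factorial : ℝ) / 2 ^ k) * Dfun b (2 * k) x y := by
  intro k
  induction k with
  | zero =>
    intro x y
    simp [pow2, Dfun]
  | succ k ih =>
    intro x y
    have hf : ∀ (x y : Fin 2 → E n), R x y = 1 * Dfun b 2 x y := by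
      intro x y; rw [hR]; ring
    simp only [pow2, cDF]
    rw [mul_Dfun b R (pow2 R k) 1 (((2 * k).factorial : ℝ) / 2 ^ k) hf ih]
    have h2 : 2 + 2 * k = 2 * (k + 1) := by omega
    have hc : Dfun b (2 + 2 * k)
          (fun i => x (Fin.cast h2 i)) (fun j => y (Fin.cast h2 j))
        = Dfun b (2 * (k + 1)) x y := dcast h2 (fun p q => b (x p) (y q))
    rw [hc]
    have h1 : ((2 + 2 * k).factorial : ℝ) = ((2 * (k + 1)).factorial : ℝ) := by rw [h2]
    rw [h1]
    have hk : ((2 * k).factorial : ℝ) ≠ 0 := Nat.cast_ne_zero.mpr (Nat.factorial_ne_zero _)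
    have hp : ((2 : ℝ) ^ k) ≠ 0 := pow_ne_zero _ two_ne_zero
    have hco : (1 : ℝ) * (((2 * k).factorial : ℝ) / 2 ^ k) *
        (((2 * (k + 1)).factorial : ℝ) / (((2 : ℕ).factorial : ℝ) * ((2 * k).factorial : ℝ)))
        = ((2 * (k + 1)).factorial : ℝ) / 2 ^ (k + 1) := by
      have h2f : ((2 : ℕ).factorial : ℝ) = 2 := by norm_num [Nat.factorial]
      rw [h2f]
      field_simp
      ring
    rw [hco]

lemma B_expand {n : ℕ} (B : E n →ₗ[ℝ] E n →ₗ[ℝ] ℝ) (e : OrthonormalBasis (Fin n) ℝ (E n))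
    (μ : Fin n → ℝ) (hdiag : ∀ i j, B (e i) (e j) = if i = j then μ i else 0)
    (u v : E n) : B u v = ∑ a, μ a * ((inner ℝ (e a) u : ℝ) * (inner ℝ (e a) v : ℝ)) := by
  conv_lhs => rw [← e.sum_repr u, ← e.sum_repr v]
  simp only [map_sum, LinearMap.sum_apply, map_smul, LinearMap.smul_apply, smul_eq_mul, hdiag,
    mul_ite, mul_zero, Finset.sum_ite_eq, Finset.sum_ite_eq', Finset.mem_univ, if_true,
    e.repr_apply_apply]
  exact Finset.sum_congr rfl fun a _ => by ring

lemma inner_estd {n : ℕ} (u : E n) (i : Fin n) : (inner ℝ u (DF.e n i) : ℝ) = u i := by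
  simp [DF.e, EuclideanSpace.inner_single_right]

lemma sum_w {n : ℕ} (e : OrthonormalBasis (Fin n) ℝ (E n)) (a a' : Fin n) :
    ∑ i, (inner ℝ (e a) (DF.e n i) : ℝ) * (inner ℝ (e a') (DF.e n i) : ℝ)
      = if a = a' then 1 else 0 := by
  simp only [inner_estd]
  have h : (inner ℝ (e a) (e a') : ℝ) = ∑ i, (e a) i * (e a') i := by
    rw [PiLp.inner_apply]
    simp [RCLike.inner_apply, mul_comm]
  rw [← h, orthonormal_iff_ite.mp e.orthonormal a a']

lemma sum_sign_inj {m : ℕ} {ι : Type*} [DecidableEq ι] (A : Fin m → ι)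
    (hA : Function.Injective A) :
    ∑ π : Equiv.Perm (Fin m), ((Equiv.Perm.sign π : ℤ) : ℝ) *
      (if ∀ j, A (π j) = A j then 1 else 0) = 1 := by
  rw [Finset.sum_eq_single 1]
  · simp
  · intro π _ hπ
    have : ¬ ∀ j, A (π j) = A j := by
      intro hc
      exact hπ (Equiv.ext fun j => hA (hc j))
    simp [this]
  · simp

lemma sum_sign_stab {m : ℕ} {ι : Type*} [DecidableEq ι] (A : Fin m → ι)
    (hA : ¬ Function.Injective A) :
    ∑ π : Equiv.Perm (Fin m), ((Equiv.Perm.sign π : ℤ) : ℝ) *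
      (if ∀ j, A (π j) = A j then 1 else 0) = 0 := by
  obtain ⟨j₁, j₂, hAe, hne⟩ : ∃ j₁ j₂, A j₁ = A j₂ ∧ j₁ ≠ j₂ := by
    rw [Function.not_injective_iff] at hA
    exact hA
  set s : Equiv.Perm (Fin m) := Equiv.swap j₁ j₂ with hs
  have hAs : ∀ j, A (s j) = A j := by
    intro j
    rcases eq_or_ne j j₁ with rfl | h1
    · rw [hs, Equiv.swap_apply_left]; exact hAe.symm
    rcases eq_or_ne j j₂ with rfl | h2
    · rw [hs, Equiv.swap_apply_right]; exact hAe
    · rw [hs, Equiv.swap_apply_of_ne_of_ne h1 h2]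
  have hPiff : ∀ π : Equiv.Perm (Fin m), (∀ j, A ((π * s) j) = A j) ↔ (∀ j, A (π j) = A j) := by
    intro π
    constructor
    · intro h j
      have := h (s j)
      rw [Equiv.Perm.mul_apply, hs, Equiv.swap_apply_self] at this
      rw [this]
      exact hAs j
    · intro h j
      rw [Equiv.Perm.mul_apply, h (s j), hAs j]
  apply Finset.sum_involution (fun π _ => π * s)
  · intro π _
    have hsgn : ((Equiv.Perm.sign (π * s) : ℤ) : ℝ) = -((Equiv.Perm.sign π : ℤ) : ℝ) := by
      rw [Equiv.Perm.sign_mul, hs, Equiv.Perm.sign_swap hne]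
      push_cast
      ring
    by_cases h : ∀ j, A (π j) = A j
    · rw [if_pos h, if_pos ((hPiff π).mpr h), hsgn]; ring
    · rw [if_neg h, if_neg (fun hc => h ((hPiff π).mp hc))]; ring
  · intro π _ _ hc
    apply hne
    have h1 := congrArg (fun σ : Equiv.Perm (Fin m) => σ j₁) hc
    simp only [hs, Equiv.Perm.mul_apply, Equiv.swap_apply_left] at h1
    exact (π.injective h1).symm
  · intro π _; exact Finset.mem_univ _
  · intro π _
    rw [mul_assoc, hs, Equiv.swap_mul_self, mul_one]

lemma card_fiber {n m : ℕ} (s : Finset (Fin n)) (hcard : s.card = m) :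
    ((Finset.univ.filter (fun A : Fin m → Fin n => Function.Injective A)).filter
      (fun A => Finset.image A Finset.univ = s)).card = m.factorial := by
  classical
  set T := ((Finset.univ.filter (fun A : Fin m → Fin n => Function.Injective A)).filter
      (fun A => Finset.image A Finset.univ = s)) with hT
  set o := s.orderIsoOfFin hcard with ho
  have hmemA : ∀ A ∈ T, ∀ j, A j ∈ s := by
    intro A hA j
    obtain ⟨-, h2⟩ := Finset.mem_filter.mp hA
    rw [← h2]
    exact Finset.mem_image_of_mem A (Finset.mem_univ j)
  have hinjA : ∀ A ∈ T, Function.Injective A := by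
    intro A hA
    obtain ⟨h1, -⟩ := Finset.mem_filter.mp hA
    exact (Finset.mem_filter.mp h1).2
  have Φ : Equiv.Perm (Fin m) ≃ {A : Fin m → Fin n // A ∈ T} := by
    refine
      { toFun := fun π => ⟨fun j => (o (π j) : Fin n), ?_⟩
        invFun := fun A =>
          Equiv.ofBijective (fun j => o.symm ⟨A.1 j, hmemA A.1 A.2 j⟩)
            (Finite.injective_iff_bijective.mp fun j j' h => ?_)
        left_inv := ?_
        right_inv := ?_ }
    · rw [hT]
      refine Finset.mem_filter.mpr ⟨Finset.mem_filter.mpr ⟨Finset.mem_univ _, ?_⟩, ?_⟩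
      · intro j j' h
        exact π.injective (o.injective (Subtype.ext h))
      · ext b
        simp only [Finset.mem_image, Finset.mem_univ, true_and]
        constructor
        · rintro ⟨j, rfl⟩
          exact (o (π j)).2
        · intro hb
          refine ⟨π⁻¹ (o.symm ⟨b, hb⟩), ?_⟩
          rw [Equiv.Perm.coe_inv, Equiv.apply_symm_apply, OrderIso.apply_symm_apply]
    · have := o.symm.injective h
      exact hinjA A.1 A.2 (congrArg Subtype.val this)
    · intro π
      ext j
      simp only [Equiv.ofBijective_apply]
      have : (⟨(o (π j) : Fin n), _⟩ : {x // x ∈ s}) = o (π j) := Subtype.ext rfl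
      rw [this, OrderIso.symm_apply_apply]
    · intro A
      apply Subtype.ext
      funext j
      simp only [Equiv.ofBijective_apply]
      rw [OrderIso.apply_symm_apply]
  have h1 : T.card = Fintype.card {A : Fin m → Fin n // A ∈ T} := (Fintype.card_coe T).symm
  rw [h1, ← Fintype.card_congr Φ, Fintype.card_perm, Fintype.card_fin]

lemma sum_inj {n : ℕ} (m : ℕ) (μ : Fin n → ℝ) :
    ∑ A ∈ Finset.univ.filter (fun A : Fin m → Fin n => Function.Injective A), ∏ j, μ (A j)
      = (m.factorial : ℝ) * esymm n m μ := by
  classical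
  rw [esymm, Finset.mul_sum]
  rw [← Finset.sum_fiberwise_of_maps_to
      (g := fun A : Fin m → Fin n => Finset.image A Finset.univ)
      (t := Finset.powersetCard m Finset.univ)
      (fun A hA => by
        rw [Finset.mem_powersetCard_univ,
          Finset.card_image_of_injective _ (Finset.mem_filter.mp hA).2, Finset.card_univ,
          Fintype.card_fin])]
  refine Finset.sum_congr rfl fun s hs => ?_
  have hcard : s.card = m := Finset.mem_powersetCard_univ.mp hs
  have hterm : ∀ A ∈ (Finset.univ.filter
        (fun A : Fin m → Fin n => Function.Injective A)).filter
        (fun A => Finset.image A Finset.univ = s),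
      ∏ j, μ (A j) = ∏ i ∈ s, μ i := by
    intro A hA
    obtain ⟨h1, h2⟩ := Finset.mem_filter.mp hA
    have hinj := (Finset.mem_filter.mp h1).2
    rw [← h2, Finset.prod_image (fun x _ y _ h => hinj h)]
  rw [Finset.sum_congr rfl hterm, Finset.sum_const, nsmul_eq_mul, card_fiber s hcard]

lemma contr_Dfun {n : ℕ} (B : E n →ₗ[ℝ] E n →ₗ[ℝ] ℝ)
    (e : OrthonormalBasis (Fin n) ℝ (E n)) (μ : Fin n → ℝ)
    (hdiag : ∀ i j, B (e i) (e j) = if i = j then μ i else 0) (m : ℕ) :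
    ∑ I : Fin m → Fin n,
      Dfun (fun u v => B u v) m (fun j => DF.e n (I j)) (fun j => DF.e n (I j))
      = (m.factorial : ℝ) * esymm n m μ := by
  classical
  have hB := B_expand B e μ hdiag
  have step1 : ∀ (π : Equiv.Perm (Fin m)) (I : Fin m → Fin n),
      ∏ j, (B (DF.e n (I j))) (DF.e n (I (π j)))
        = ∑ A : Fin m → Fin n, ∏ j,
            (μ (A j) * ((inner ℝ (e (A j)) (DF.e n (I j)) : ℝ) *
              (inner ℝ (e (A j)) (DF.e n (I (π j))) : ℝ))) := by
    intro π I
    have h := Finset.prod_univ_sum (fun _ : Fin m => (Finset.univ : Finset (Fin n)))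
      (fun j a => μ a * ((inner ℝ (e a) (DF.e n (I j)) : ℝ) *
        (inner ℝ (e a) (DF.e n (I (π j))) : ℝ)))
    rw [Fintype.piFinset_univ] at h
    rw [← h]
    exact Finset.prod_congr rfl fun j _ => hB _ _
  have step2 : ∀ (π : Equiv.Perm (Fin m)) (A : Fin m → Fin n),
      ∑ I : Fin m → Fin n, ∏ j,
          (μ (A j) * ((inner ℝ (e (A j)) (DF.e n (I j)) : ℝ) *
            (inner ℝ (e (A j)) (DF.e n (I (π j))) : ℝ)))
        = (∏ j, μ (A j)) * (if ∀ j, A j = A (π⁻¹ j) then 1 else 0) := by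
    intro π A
    have hre : ∀ I : Fin m → Fin n,
        ∏ j, (inner ℝ (e (A j)) (DF.e n (I (π j))) : ℝ)
          = ∏ j, (inner ℝ (e (A (π⁻¹ j))) (DF.e n (I j)) : ℝ) := by
      intro I
      have := Equiv.prod_comp π (fun j => (inner ℝ (e (A (π⁻¹ j))) (DF.e n (I j)) : ℝ))
      simpa using this
    have hI : ∀ I : Fin m → Fin n,
        ∏ j, (μ (A j) * ((inner ℝ (e (A j)) (DF.e n (I j)) : ℝ) *
          (inner ℝ (e (A j)) (DF.e n (I (π j))) : ℝ)))
        = (∏ j, μ (A j)) * ∏ j, ((inner ℝ (e (A j)) (DF.e n (I j)) : ℝ) *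
            (inner ℝ (e (A (π⁻¹ j))) (DF.e n (I j)) : ℝ)) := by
      intro I
      rw [Finset.prod_mul_distrib]
      congr 1
      rw [Finset.prod_mul_distrib, hre I, ← Finset.prod_mul_distrib]
    simp only [hI]
    rw [← Finset.mul_sum]
    congr 1
    have h := Finset.prod_univ_sum (fun _ : Fin m => (Finset.univ : Finset (Fin n)))
      (fun j i => (inner ℝ (e (A j)) (DF.e n i) : ℝ) * (inner ℝ (e (A (π⁻¹ j))) (DF.e n i) : ℝ))
    rw [Fintype.piFinset_univ] at h
    rw [← h]
    have hW : ∀ j : Fin m,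
        ∑ i, (inner ℝ (e (A j)) (DF.e n i) : ℝ) * (inner ℝ (e (A (π⁻¹ j))) (DF.e n i) : ℝ)
          = if A j = A (π⁻¹ j) then 1 else 0 := fun j => sum_w e _ _
    rw [Finset.prod_congr rfl (fun j _ => hW j), Finset.prod_boole]
    simp
  have hcond : ∀ (π : Equiv.Perm (Fin m)) (A : Fin m → Fin n),
      (∀ j, A j = A (π⁻¹ j)) ↔ (∀ j, A (π j) = A j) := by
    intro π A
    constructor
    · intro h j
      rw [h (π j), Equiv.Perm.coe_inv, Equiv.symm_apply_apply]
    · intro h j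
      rw [← h (π⁻¹ j), Equiv.Perm.coe_inv, Equiv.apply_symm_apply]
  calc ∑ I : Fin m → Fin n,
      Dfun (fun u v => B u v) m (fun j => DF.e n (I j)) (fun j => DF.e n (I j))
      = ∑ π : Equiv.Perm (Fin m), ∑ I : Fin m → Fin n,
          ((Equiv.Perm.sign π : ℤ) : ℝ) * ∏ j, (B (DF.e n (I j))) (DF.e n (I (π j))) := by
        rw [Finset.sum_comm]
        rfl
    _ = ∑ π : Equiv.Perm (Fin m), ∑ A : Fin m → Fin n,
          ((Equiv.Perm.sign π : ℤ) : ℝ) *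
            ((∏ j, μ (A j)) * (if ∀ j, A j = A (π⁻¹ j) then 1 else 0)) := by
        refine Finset.sum_congr rfl fun π _ => ?_
        rw [← Finset.mul_sum, ← Finset.mul_sum]
        congr 1
        rw [Finset.sum_congr rfl (fun I _ => step1 π I), Finset.sum_comm]
        exact Finset.sum_congr rfl fun A _ => step2 π A
    _ = ∑ A : Fin m → Fin n, (∏ j, μ (A j)) *
          ∑ π : Equiv.Perm (Fin m), ((Equiv.Perm.sign π : ℤ) : ℝ) *
            (if ∀ j, A (π j) = A j then 1 else 0) := by
        rw [Finset.sum_comm]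
        refine Finset.sum_congr rfl fun A _ => ?_
        rw [Finset.mul_sum]
        refine Finset.sum_congr rfl fun π _ => ?_
        rw [if_congr (hcond π A) rfl rfl]
        ring
    _ = ∑ A : Fin m → Fin n, (∏ j, μ (A j)) *
          (if Function.Injective A then 1 else 0) := by
        refine Finset.sum_congr rfl fun A _ => ?_
        congr 1
        by_cases h : Function.Injective A
        · rw [sum_sign_inj A h, if_pos h]
        · rw [sum_sign_stab A h, if_neg h]
    _ = ∑ A ∈ Finset.univ.filter (fun A : Fin m → Fin n => Function.Injective A),
          ∏ j, μ (A j) := by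
        rw [Finset.sum_filter]
        exact Finset.sum_congr rfl fun A _ => by
          by_cases h : Function.Injective A <;> simp [h]
    _ = (m.factorial : ℝ) * esymm n m μ := sum_inj m μ

end DF
/-- For a hypersurface of Euclidean space with second fundamental form `B`
and curvature `R` (Gauss equation `R = (1/2)B²`): `B^{2k} = 2^k R^k`, and the even symmetric
functions of the principal curvatures are intrinsic: `s_{2k} = (2^k/((2k)!)²) c^{2k}(R^k)`. -/
theorem DF.hypersurface_even_esymm_intrinsic {n k : ℕ} (h2k : 2 * k ≤ n)
    (B : E n →ₗ[ℝ] E n →ₗ[ℝ] ℝ) (hB : ∀ x y, B x y = B y x)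
    (e : OrthonormalBasis (Fin n) ℝ (E n)) (μ : Fin n → ℝ)
    (hdiag : ∀ i j, B (e i) (e j) = if i = j then μ i else 0)
    (R : DF n 2 2) (hGauss : R = (1 / 2 : ℝ) • DF.pow1 (DF.ofBilin B) 2) :
    DF.pow1 (DF.ofBilin B) (2 * k) = (2 ^ k : ℝ) • DF.pow2 R k ∧
    DF.esymm n (2 * k) μ =
      (2 ^ k : ℝ) / (((2 * k).factorial : ℝ)) ^ 2 *
        DF.scal (DF.contr (2 * k) 0 0
          (DF.cDF (by omega) (by omega) (DF.pow2 R k) : DF n (2 * k + 0) (2 * k + 0))) := by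
  classical
  have hfac : ((2 * k).factorial : ℝ) ≠ 0 := Nat.cast_ne_zero.mpr (Nat.factorial_ne_zero _)
  have hpow : ((2 : ℝ) ^ k) ≠ 0 := pow_ne_zero _ two_ne_zero
  have hR : ∀ x y, R x y = DF.Dfun (fun u v => B u v) 2 x y := by
    intro x y
    rw [hGauss]
    have h1 := DF.pow1_eq B 2 x y
    have h2 : ((1 / 2 : ℝ) • DF.pow1 (DF.ofBilin B) 2) x y
        = (1 / 2 : ℝ) * DF.pow1 (DF.ofBilin B) 2 x y := rfl
    rw [h2, h1]
    have h3 : ((Nat.factorial 2 : ℕ) : ℝ) = 2 := by norm_num [Nat.factorial]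
    rw [h3]
    ring
  constructor
  · funext x y
    have h1 := DF.pow1_eq B (2 * k) x y
    have h2 := DF.pow2_eq (fun u v => B u v) R hR k x y
    have h3 : ((2 ^ k : ℝ) • DF.pow2 R k) x y = (2 ^ k : ℝ) * DF.pow2 R k x y := rfl
    rw [h1, h3, h2]
    field_simp
  · have key : DF.scal (DF.contr (2 * k) 0 0
        (DF.cDF (by omega) (by omega) (DF.pow2 R k) : DF n (2 * k + 0) (2 * k + 0)))
        = ∑ I : Fin (2 * k) → Fin n,
            DF.pow2 R k (fun j => DF.e n (I j)) (fun j => DF.e n (I j)) := by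
      simp only [DF.scal, DF.contr, DF.cDF]
      refine Finset.sum_congr rfl fun I _ => ?_
      congr 1 <;>
      · funext i
        have hci : Fin.cast (by omega : 2 * k = 2 * k + 0) i = Fin.castAdd 0 i := rfl
        rw [hci, Fin.append_left]
    rw [key, Finset.sum_congr rfl
        (fun I _ => DF.pow2_eq (fun u v => B u v) R hR k _ _),
      ← Finset.mul_sum, DF.contr_Dfun B e μ hdiag (2 * k)]
    field_simp
end
end

section
/- Let M be an n-dimensional submanifold of constant curvature λ ≠ 0 of a Riemannian manifold, with n ≥ 2k+1. Then for any normal vector N, h_{2k+1}(N) = [(n−1)! λ^k / ((n−2k−1)! 2^k)] · c(B_N). Consequently, M is (2k)-minimal if and only if M is minimal in the usual sense. -/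
open Finset

noncomputable section

namespace DF

open Equiv Function

variable {n : ℕ}

/-! ### Auxiliary combinatorial machinery -/

/-- sign of a permutation, as a real number -/
def sg {p : ℕ} (σ : Equiv.Perm (Fin p)) : ℝ := ((Equiv.Perm.sign σ : ℤ) : ℝ)

lemma sg_def {p : ℕ} (σ : Equiv.Perm (Fin p)) :
    ((Equiv.Perm.sign σ : ℤ) : ℝ) = sg σ := rfl

lemma sg_mul {p : ℕ} (σ τ : Equiv.Perm (Fin p)) : sg (σ * τ) = sg σ * sg τ := by
  unfold sg; rw [map_mul, Units.val_mul, Int.cast_mul]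

lemma sg_self_mul {p : ℕ} (σ : Equiv.Perm (Fin p)) : sg σ * sg σ = 1 := by
  unfold sg; rw [← Int.cast_mul, ← Units.val_mul, Int.units_mul_self]; simp

lemma sg_one {p : ℕ} : sg (1 : Equiv.Perm (Fin p)) = 1 := by simp [sg]

instance permUniqueZero : Unique (Equiv.Perm (Fin 0)) :=
  ⟨⟨1⟩, fun σ => Equiv.ext fun x => x.elim0⟩

instance permUniqueOne : Unique (Equiv.Perm (Fin 1)) :=
  ⟨⟨1⟩, fun σ => Equiv.ext fun x => Subsingleton.elim _ _⟩

/-- the block permutation `ρ ⊕ π` of `Fin (a+b)` -/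
def E2 {a b : ℕ} (ρ : Equiv.Perm (Fin a)) (π : Equiv.Perm (Fin b)) :
    Equiv.Perm (Fin (a + b)) :=
  finSumFinEquiv.permCongr (Equiv.Perm.sumCongr ρ π)

@[simp] lemma E2_castAdd {a b : ℕ} (ρ : Equiv.Perm (Fin a)) (π : Equiv.Perm (Fin b)) (j : Fin a) :
    E2 ρ π (Fin.castAdd b j) = Fin.castAdd b (ρ j) := by
  simp [E2, Equiv.Perm.sumCongr_apply]

@[simp] lemma E2_natAdd {a b : ℕ} (ρ : Equiv.Perm (Fin a)) (π : Equiv.Perm (Fin b)) (j : Fin b) :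
    E2 ρ π (Fin.natAdd a j) = Fin.natAdd a (π j) := by
  simp [E2, Equiv.Perm.sumCongr_apply]

lemma sg_E2 {a b : ℕ} (ρ : Equiv.Perm (Fin a)) (π : Equiv.Perm (Fin b)) :
    sg (E2 ρ π) = sg ρ * sg π := by
  unfold sg E2
  rw [Equiv.Perm.sign_permCongr, Equiv.Perm.sign_sumCongr, Units.val_mul, Int.cast_mul]

lemma sg_permCongr {p p' : ℕ} (ee : Fin p ≃ Fin p') (σ : Equiv.Perm (Fin p)) :
    sg (ee.permCongr σ) = sg σ := by
  unfold sg; rw [Equiv.Perm.sign_permCongr]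

/-- the Kronecker delta -/
def dl {n : ℕ} (a b : Fin n) : ℝ := if a = b then 1 else 0

@[simp] lemma dl_self (a : Fin n) : dl a a = 1 := if_pos rfl

lemma dl_ne {a b : Fin n} (h : a ≠ b) : dl a b = 0 := if_neg h

lemma inner_e (a b : Fin n) : (@inner ℝ _ _ (e n a) (e n b)) = dl a b := by
  rw [e, e, EuclideanSpace.inner_single_left, EuclideanSpace.single_apply, dl]
  simp only [map_one, one_mul]

/-- the fully antisymmetrized Gram-type double sum -/
def Dg {n : ℕ} (p : ℕ) (A B : Fin p → Fin n) : ℝ :=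
  ∑ σ : Equiv.Perm (Fin p), ∑ τ : Equiv.Perm (Fin p),
    sg σ * sg τ * ∏ j, dl (A (σ j)) (B (τ j))

lemma Dg_zero (A B : Fin 0 → Fin n) : Dg 0 A B = 1 := by
  rw [Dg, Fintype.sum_unique, Fintype.sum_unique]
  simp [sg_one]

lemma Dg_reindex {p p' : ℕ} (h : p' = p) (A B : Fin p → Fin n) :
    Dg p A B = Dg p' (fun i => A (Fin.cast h i)) (fun i => B (Fin.cast h i)) := by
  symm
  calc Dg p' (fun i => A (Fin.cast h i)) (fun i => B (Fin.cast h i))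
      = ∑ σ' : Equiv.Perm (Fin p'), ∑ τ' : Equiv.Perm (Fin p'),
          sg ((finCongr h).permCongr σ') * sg ((finCongr h).permCongr τ') *
            ∏ j, dl (A ((finCongr h).permCongr σ' j)) (B ((finCongr h).permCongr τ' j)) := by
        rw [Dg]
        refine Finset.sum_congr rfl fun σ' _ => Finset.sum_congr rfl fun τ' _ => ?_
        simp only [sg_permCongr]
        congr 1
        rw [← Equiv.prod_comp (finCongr h) (fun i =>
          dl (A ((finCongr h).permCongr σ' i)) (B ((finCongr h).permCongr τ' i)))]
        exact Finset.prod_congr rfl fun j _ => by simp [Equiv.permCongr_apply]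
    _ = ∑ σ' : Equiv.Perm (Fin p'), ∑ τ : Equiv.Perm (Fin p),
          sg ((finCongr h).permCongr σ') * sg τ *
            ∏ j, dl (A ((finCongr h).permCongr σ' j)) (B (τ j)) :=
        Finset.sum_congr rfl fun σ' _ =>
          Equiv.sum_comp (finCongr h).permCongr (fun τ =>
            sg ((finCongr h).permCongr σ') * sg τ *
              ∏ j, dl (A ((finCongr h).permCongr σ' j)) (B (τ j)))
    _ = ∑ σ : Equiv.Perm (Fin p), ∑ τ : Equiv.Perm (Fin p),
          sg σ * sg τ * ∏ j, dl (A (σ j)) (B (τ j)) :=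
        Equiv.sum_comp (finCongr h).permCongr (fun σ => ∑ τ : Equiv.Perm (Fin p),
          sg σ * sg τ * ∏ j, dl (A (σ j)) (B (τ j)))
    _ = Dg p A B := by rw [Dg]

lemma expand_one {X : Type*} (F : X → X → ℝ) (u v : Fin 1 → X) :
    F (u 0) (v 0) = ∑ α : Equiv.Perm (Fin 1), ∑ β : Equiv.Perm (Fin 1),
      sg α * sg β * F (u (α 0)) (v (β 0)) := by
  rw [Fintype.sum_unique, Fintype.sum_unique]
  simp [sg_one]

lemma sum_comm3 {ι₁ ι₂ ι₃ : Type*} [Fintype ι₁] [Fintype ι₂] [Fintype ι₃]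
    (f : ι₁ → ι₂ → ι₃ → ℝ) :
    ∑ x, ∑ y, ∑ z, f x y z = ∑ y, ∑ z, ∑ x, f x y z := by
  rw [Finset.sum_comm]
  exact Finset.sum_congr rfl fun y _ => Finset.sum_comm

lemma absorb_one {a b : ℕ} (f : Equiv.Perm (Fin (a + b)) → ℝ) :
    (∑ σ : Equiv.Perm (Fin (a + b)), ∑ ρ : Equiv.Perm (Fin a), ∑ π : Equiv.Perm (Fin b),
      f (σ * E2 ρ π)) = ((a.factorial * b.factorial : ℕ) : ℝ) * ∑ σ, f σ := by
  have h1 : ∀ (ρ : Equiv.Perm (Fin a)) (π : Equiv.Perm (Fin b)),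
      (∑ σ : Equiv.Perm (Fin (a + b)), f (σ * E2 ρ π)) = ∑ σ, f σ := fun ρ π =>
    Equiv.sum_comp (Equiv.mulRight (E2 ρ π)) f
  rw [Finset.sum_comm]
  calc (∑ ρ : Equiv.Perm (Fin a), ∑ σ : Equiv.Perm (Fin (a + b)), ∑ π : Equiv.Perm (Fin b),
        f (σ * E2 ρ π))
      = ∑ ρ : Equiv.Perm (Fin a), ∑ π : Equiv.Perm (Fin b),
          ∑ σ : Equiv.Perm (Fin (a + b)), f (σ * E2 ρ π) :=
        Finset.sum_congr rfl fun ρ _ => Finset.sum_comm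
    _ = ∑ _ρ : Equiv.Perm (Fin a), ∑ _π : Equiv.Perm (Fin b), ∑ σ, f σ :=
        Finset.sum_congr rfl fun ρ _ => Finset.sum_congr rfl fun π _ => h1 ρ π
    _ = ((a.factorial * b.factorial : ℕ) : ℝ) * ∑ σ, f σ := by
        rw [Finset.sum_const, Finset.sum_const, Finset.card_univ, Finset.card_univ,
          Fintype.card_perm, Fintype.card_perm, Fintype.card_fin, Fintype.card_fin,
          smul_smul, nsmul_eq_mul]

/-- The central absorption lemma: a product of two double forms, each given (at basis
index tuples) as a double antisymmetrization of kernels `v`, `w`, evaluates to the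
double antisymmetrization of the product of kernels. -/
lemma main_absorb {a b : ℕ}
    (v V : (Fin a → Fin n) → (Fin a → Fin n) → ℝ)
    (w W : (Fin b → Fin n) → (Fin b → Fin n) → ℝ)
    (hV : ∀ u u', V u u' = ∑ ρ : Equiv.Perm (Fin a), ∑ ρ' : Equiv.Perm (Fin a),
        sg ρ * sg ρ' * v (fun i => u (ρ i)) (fun i => u' (ρ' i)))
    (hW : ∀ u u', W u u' = ∑ α : Equiv.Perm (Fin b), ∑ β : Equiv.Perm (Fin b),
        sg α * sg β * w (fun i => u (α i)) (fun i => u' (β i)))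
    (A B : Fin (a + b) → Fin n) :
    (∑ σ : Equiv.Perm (Fin (a + b)), ∑ τ : Equiv.Perm (Fin (a + b)),
      sg σ * sg τ *
        (V (fun i => A (σ (Fin.castAdd b i))) (fun i => B (τ (Fin.castAdd b i))) *
         W (fun i => A (σ (Fin.natAdd a i))) (fun i => B (τ (Fin.natAdd a i))))) =
    ((a.factorial * b.factorial : ℕ) : ℝ) ^ 2 *
      ∑ σ : Equiv.Perm (Fin (a + b)), ∑ τ : Equiv.Perm (Fin (a + b)),
        sg σ * sg τ *
          (v (fun i => A (σ (Fin.castAdd b i))) (fun i => B (τ (Fin.castAdd b i))) *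
           w (fun i => A (σ (Fin.natAdd a i))) (fun i => B (τ (Fin.natAdd a i)))) := by
  set G : Equiv.Perm (Fin (a + b)) → Equiv.Perm (Fin (a + b)) → ℝ := fun σ τ =>
    sg σ * sg τ *
      (v (fun i => A (σ (Fin.castAdd b i))) (fun i => B (τ (Fin.castAdd b i))) *
       w (fun i => A (σ (Fin.natAdd a i))) (fun i => B (τ (Fin.natAdd a i)))) with hG
  have TW : ∀ σ τ : Equiv.Perm (Fin (a + b)),
      sg σ * sg τ *
        (V (fun i => A (σ (Fin.castAdd b i))) (fun i => B (τ (Fin.castAdd b i))) *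
         W (fun i => A (σ (Fin.natAdd a i))) (fun i => B (τ (Fin.natAdd a i)))) =
      ∑ ρ : Equiv.Perm (Fin a), ∑ α : Equiv.Perm (Fin b),
        ∑ ρ' : Equiv.Perm (Fin a), ∑ β : Equiv.Perm (Fin b),
          G (σ * E2 ρ α) (τ * E2 ρ' β) := by
    intro σ τ
    rw [hV, hW, Finset.sum_mul_sum, Finset.mul_sum]
    refine Finset.sum_congr rfl fun ρ _ => ?_
    rw [Finset.mul_sum]
    refine Finset.sum_congr rfl fun α _ => ?_
    rw [Finset.sum_mul_sum, Finset.mul_sum]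
    refine Finset.sum_congr rfl fun ρ' _ => ?_
    rw [Finset.mul_sum]
    refine Finset.sum_congr rfl fun β _ => ?_
    simp only [hG, sg_mul, sg_E2, Equiv.Perm.mul_apply, E2_castAdd, E2_natAdd]
    ring
  calc (∑ σ : Equiv.Perm (Fin (a + b)), ∑ τ : Equiv.Perm (Fin (a + b)),
        sg σ * sg τ *
          (V (fun i => A (σ (Fin.castAdd b i))) (fun i => B (τ (Fin.castAdd b i))) *
           W (fun i => A (σ (Fin.natAdd a i))) (fun i => B (τ (Fin.natAdd a i)))))
      = ∑ σ : Equiv.Perm (Fin (a + b)), ∑ τ : Equiv.Perm (Fin (a + b)),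
          ∑ ρ : Equiv.Perm (Fin a), ∑ α : Equiv.Perm (Fin b),
            ∑ ρ' : Equiv.Perm (Fin a), ∑ β : Equiv.Perm (Fin b),
              G (σ * E2 ρ α) (τ * E2 ρ' β) :=
        Finset.sum_congr rfl fun σ _ => Finset.sum_congr rfl fun τ _ => TW σ τ
    _ = ∑ σ : Equiv.Perm (Fin (a + b)), ∑ ρ : Equiv.Perm (Fin a), ∑ α : Equiv.Perm (Fin b),
          ∑ τ : Equiv.Perm (Fin (a + b)), ∑ ρ' : Equiv.Perm (Fin a), ∑ β : Equiv.Perm (Fin b),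
            G (σ * E2 ρ α) (τ * E2 ρ' β) :=
        Finset.sum_congr rfl fun σ _ => sum_comm3 _
    _ = ∑ σ : Equiv.Perm (Fin (a + b)), ∑ ρ : Equiv.Perm (Fin a), ∑ α : Equiv.Perm (Fin b),
          ((a.factorial * b.factorial : ℕ) : ℝ) * ∑ τ, G (σ * E2 ρ α) τ :=
        Finset.sum_congr rfl fun σ _ => Finset.sum_congr rfl fun ρ _ =>
          Finset.sum_congr rfl fun α _ => absorb_one fun τ => G (σ * E2 ρ α) τ
    _ = ((a.factorial * b.factorial : ℕ) : ℝ) *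
          ∑ σ : Equiv.Perm (Fin (a + b)), ∑ ρ : Equiv.Perm (Fin a), ∑ α : Equiv.Perm (Fin b),
            (fun μ => ∑ τ, G μ τ) (σ * E2 ρ α) := by
        simp_rw [← Finset.mul_sum]
    _ = ((a.factorial * b.factorial : ℕ) : ℝ) *
          (((a.factorial * b.factorial : ℕ) : ℝ) * ∑ σ, (fun μ => ∑ τ, G μ τ) σ) := by
        rw [absorb_one fun μ => ∑ τ, G μ τ]
    _ = ((a.factorial * b.factorial : ℕ) : ℝ) ^ 2 * ∑ σ, ∑ τ, G σ τ := by ring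

lemma scale_expand {p : ℕ} (c : ℝ) (u u' : Fin p → Fin n) :
    c * Dg p u u' = ∑ ρ : Equiv.Perm (Fin p), ∑ ρ' : Equiv.Perm (Fin p),
      sg ρ * sg ρ' * (c * ∏ j, dl (u (ρ j)) (u' (ρ' j))) := by
  rw [Dg, Finset.mul_sum]
  refine Finset.sum_congr rfl fun ρ _ => ?_
  rw [Finset.mul_sum]
  exact Finset.sum_congr rfl fun ρ' _ => by ring

lemma mul_g_pow1 (p : ℕ)
    (hpow : ∀ A B : Fin p → Fin n,
      pow1 (gDF n) p (fun i => e n (A i)) (fun j => e n (B j)) = Dg p A B)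
    (A B : Fin (1 + p) → Fin n) :
    mul (gDF n) (pow1 (gDF n) p) (fun i => e n (A i)) (fun j => e n (B j)) = Dg (1 + p) A B := by
  have key : (∑ σ : Equiv.Perm (Fin (1 + p)), ∑ τ : Equiv.Perm (Fin (1 + p)),
      sg σ * sg τ *
        (dl (A (σ (Fin.castAdd p 0))) (B (τ (Fin.castAdd p 0))) *
         Dg p (fun i => A (σ (Fin.natAdd 1 i))) (fun i => B (τ (Fin.natAdd 1 i))))) =
      ((Nat.factorial 1 * Nat.factorial p : ℕ) : ℝ) ^ 2 *
        ∑ σ : Equiv.Perm (Fin (1 + p)), ∑ τ : Equiv.Perm (Fin (1 + p)),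
          sg σ * sg τ *
            (dl (A (σ (Fin.castAdd p 0))) (B (τ (Fin.castAdd p 0))) *
             ∏ j : Fin p, dl (A (σ (Fin.natAdd 1 j))) (B (τ (Fin.natAdd 1 j)))) :=
    main_absorb (a := 1) (b := p)
      (fun u u' => dl (u 0) (u' 0)) (fun u u' => dl (u 0) (u' 0))
      (fun u v => ∏ j, dl (u j) (v j)) (Dg p)
      (fun u v => expand_one dl u v) (fun u v => rfl) A B
  have merge : (∑ σ : Equiv.Perm (Fin (1 + p)), ∑ τ : Equiv.Perm (Fin (1 + p)),
      sg σ * sg τ *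
        (dl (A (σ (Fin.castAdd p 0))) (B (τ (Fin.castAdd p 0))) *
         ∏ j : Fin p, dl (A (σ (Fin.natAdd 1 j))) (B (τ (Fin.natAdd 1 j))))) =
      Dg (1 + p) A B := by
    rw [Dg]
    refine Finset.sum_congr rfl fun σ _ => Finset.sum_congr rfl fun τ _ => ?_
    rw [Fin.prod_univ_add (f := fun i => dl (A (σ i)) (B (τ i))), Fin.prod_univ_one]
  have hc : ((Nat.factorial 1 * Nat.factorial p * Nat.factorial 1 * Nat.factorial p : ℕ) : ℝ)⁻¹ *
      ((Nat.factorial 1 * Nat.factorial p : ℕ) : ℝ) ^ 2 = 1 := by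
    have hp : (p.factorial : ℝ) ≠ 0 := Nat.cast_ne_zero.mpr p.factorial_ne_zero
    push_cast
    field_simp
  simp only [mul, gDF, hpow, inner_e, sg_def]
  rw [key, merge, ← mul_assoc, hc, one_mul]

lemma pow1_apply : ∀ (p : ℕ) (A B : Fin p → Fin n),
    pow1 (gDF n) p (fun i => e n (A i)) (fun j => e n (B j)) = Dg p A B := by
  intro p
  induction p with
  | zero => intro A B; rw [Dg_zero]; rfl
  | succ p ih =>
    intro A B
    have hcast : (1 : ℕ) + p = p + 1 := Nat.add_comm 1 p
    have h1 := mul_g_pow1 p ih (fun i => A (Fin.cast hcast i)) (fun i => B (Fin.cast hcast i))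
    have h2 : Dg (1 + p) (fun i => A (Fin.cast hcast i)) (fun i => B (Fin.cast hcast i)) =
        Dg (p + 1) A B := (Dg_reindex hcast A B).symm
    exact h1.trans h2

lemma mul_R_pow2 (lam : ℝ) (R : DF n 2 2) (hR : R = (lam / 2) • pow1 (gDF n) 2) (k : ℕ)
    (ih : ∀ A B : Fin (2 * k) → Fin n,
      pow2 R k (fun i => e n (A i)) (fun j => e n (B j)) = (lam / 2) ^ k * Dg (2 * k) A B)
    (A B : Fin (2 + 2 * k) → Fin n) :
    mul R (pow2 R k) (fun i => e n (A i)) (fun j => e n (B j)) =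
      (lam / 2) ^ (k + 1) * Dg (2 + 2 * k) A B := by
  have hRval : ∀ A B : Fin 2 → Fin n,
      R (fun i => e n (A i)) (fun j => e n (B j)) = lam / 2 * Dg 2 A B := by
    intro A B
    rw [hR]
    have h := pow1_apply 2 A B
    simp only [Pi.smul_apply, smul_eq_mul, h]
  have key : (∑ σ : Equiv.Perm (Fin (2 + 2 * k)), ∑ τ : Equiv.Perm (Fin (2 + 2 * k)),
      sg σ * sg τ *
        ((lam / 2 * Dg 2 (fun i => A (σ (Fin.castAdd (2 * k) i)))
            (fun i => B (τ (Fin.castAdd (2 * k) i)))) *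
         ((lam / 2) ^ k * Dg (2 * k) (fun i => A (σ (Fin.natAdd 2 i)))
            (fun i => B (τ (Fin.natAdd 2 i)))))) =
      ((Nat.factorial 2 * Nat.factorial (2 * k) : ℕ) : ℝ) ^ 2 *
        ∑ σ : Equiv.Perm (Fin (2 + 2 * k)), ∑ τ : Equiv.Perm (Fin (2 + 2 * k)),
          sg σ * sg τ *
            ((lam / 2 * ∏ j : Fin 2, dl (A (σ (Fin.castAdd (2 * k) j)))
                (B (τ (Fin.castAdd (2 * k) j)))) *
             ((lam / 2) ^ k * ∏ j : Fin (2 * k), dl (A (σ (Fin.natAdd 2 j)))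
                (B (τ (Fin.natAdd 2 j))))) :=
    main_absorb (a := 2) (b := 2 * k)
      (fun u u' => lam / 2 * ∏ j, dl (u j) (u' j)) (fun u u' => lam / 2 * Dg 2 u u')
      (fun u v => (lam / 2) ^ k * ∏ j, dl (u j) (v j))
      (fun u v => (lam / 2) ^ k * Dg (2 * k) u v)
      (fun u u' => scale_expand _ u u') (fun u v => scale_expand _ u v) A B
  have merge : (∑ σ : Equiv.Perm (Fin (2 + 2 * k)), ∑ τ : Equiv.Perm (Fin (2 + 2 * k)),
      sg σ * sg τ *
        ((lam / 2 * ∏ j : Fin 2, dl (A (σ (Fin.castAdd (2 * k) j)))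
            (B (τ (Fin.castAdd (2 * k) j)))) *
         ((lam / 2) ^ k * ∏ j : Fin (2 * k), dl (A (σ (Fin.natAdd 2 j)))
            (B (τ (Fin.natAdd 2 j)))))) =
      (lam / 2) ^ (k + 1) * Dg (2 + 2 * k) A B := by
    rw [Dg, Finset.mul_sum]
    refine Finset.sum_congr rfl fun σ _ => ?_
    rw [Finset.mul_sum]
    refine Finset.sum_congr rfl fun τ _ => ?_
    rw [Fin.prod_univ_add (f := fun i => dl (A (σ i)) (B (τ i)))]
    ring
  have hc : ((Nat.factorial 2 * Nat.factorial (2 * k) * Nat.factorial 2 *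
      Nat.factorial (2 * k) : ℕ) : ℝ)⁻¹ *
      ((Nat.factorial 2 * Nat.factorial (2 * k) : ℕ) : ℝ) ^ 2 = 1 := by
    have hp : ((2 * k).factorial : ℝ) ≠ 0 := Nat.cast_ne_zero.mpr (2 * k).factorial_ne_zero
    push_cast
    field_simp
  simp only [mul, hRval, ih, sg_def]
  rw [key, merge, ← mul_assoc, hc, one_mul]

lemma pow2_apply (lam : ℝ) (R : DF n 2 2) (hR : R = (lam / 2) • pow1 (gDF n) 2) :
    ∀ (k : ℕ) (A B : Fin (2 * k) → Fin n),
      pow2 R k (fun i => e n (A i)) (fun j => e n (B j)) = (lam / 2) ^ k * Dg (2 * k) A B := by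
  intro k
  induction k with
  | zero =>
    intro A B
    rw [Dg_zero]
    norm_num
    rfl
  | succ k ih =>
    intro A B
    have hcast : 2 + 2 * k = 2 * (k + 1) := by ring
    have h1 := mul_R_pow2 lam R hR k ih
      (fun i => A (Fin.cast hcast i)) (fun i => B (Fin.cast hcast i))
    have h2 : (lam / 2) ^ (k + 1) * Dg (2 + 2 * k)
        (fun i => A (Fin.cast hcast i)) (fun i => B (Fin.cast hcast i)) =
        (lam / 2) ^ (k + 1) * Dg (2 * (k + 1)) A B := by
      rw [Dg_reindex hcast A B]
    exact h1.trans h2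

/-- the bilinear kernel at basis indices -/
def qB {n : ℕ} (BN : E n →ₗ[ℝ] E n →ₗ[ℝ] ℝ) (s t : Fin n) : ℝ := BN (e n s) (e n t)

lemma qB_def {BN : E n →ₗ[ℝ] E n →ₗ[ℝ] ℝ} (s t : Fin n) :
    BN (e n s) (e n t) = qB BN s t := rfl

/-- mixed Gram/bilinear antisymmetrized sum (one special slot at the end) -/
def DQ {n : ℕ} (BN : E n →ₗ[ℝ] E n →ₗ[ℝ] ℝ) (b : ℕ) (A B : Fin (b + 1) → Fin n) : ℝ :=
  ∑ σ : Equiv.Perm (Fin (b + 1)), ∑ τ : Equiv.Perm (Fin (b + 1)),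
    sg σ * sg τ *
      ((∏ j : Fin b, dl (A (σ (Fin.castAdd 1 j))) (B (τ (Fin.castAdd 1 j)))) *
       qB BN (A (σ (Fin.natAdd b 0))) (B (τ (Fin.natAdd b 0))))

lemma phi_apply (lam : ℝ) (R : DF n 2 2) (hR : R = (lam / 2) • pow1 (gDF n) 2)
    (BN : E n →ₗ[ℝ] E n →ₗ[ℝ] ℝ) (k : ℕ) :
    ∀ A B : Fin (2 * k + 1) → Fin n,
    mul (pow2 R k) (ofBilin BN) (fun i => e n (A i)) (fun j => e n (B j)) =
      (lam / 2) ^ k * DQ BN (2 * k) A B := by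
  intro A B
  have key : (∑ σ : Equiv.Perm (Fin (2 * k + 1)), ∑ τ : Equiv.Perm (Fin (2 * k + 1)),
      sg σ * sg τ *
        (((lam / 2) ^ k * Dg (2 * k) (fun i => A (σ (Fin.castAdd 1 i)))
            (fun i => B (τ (Fin.castAdd 1 i)))) *
         qB BN (A (σ (Fin.natAdd (2 * k) 0))) (B (τ (Fin.natAdd (2 * k) 0))))) =
      ((Nat.factorial (2 * k) * Nat.factorial 1 : ℕ) : ℝ) ^ 2 *
        ∑ σ : Equiv.Perm (Fin (2 * k + 1)), ∑ τ : Equiv.Perm (Fin (2 * k + 1)),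
          sg σ * sg τ *
            (((lam / 2) ^ k * ∏ j : Fin (2 * k), dl (A (σ (Fin.castAdd 1 j)))
                (B (τ (Fin.castAdd 1 j)))) *
             qB BN (A (σ (Fin.natAdd (2 * k) 0))) (B (τ (Fin.natAdd (2 * k) 0)))) :=
    main_absorb (a := 2 * k) (b := 1)
      (fun u v => (lam / 2) ^ k * ∏ j, dl (u j) (v j))
      (fun u v => (lam / 2) ^ k * Dg (2 * k) u v)
      (fun u v => qB BN (u 0) (v 0)) (fun u v => qB BN (u 0) (v 0))
      (fun u v => scale_expand _ u v) (fun u v => expand_one (qB BN) u v) A B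
  have merge : (∑ σ : Equiv.Perm (Fin (2 * k + 1)), ∑ τ : Equiv.Perm (Fin (2 * k + 1)),
      sg σ * sg τ *
        (((lam / 2) ^ k * ∏ j : Fin (2 * k), dl (A (σ (Fin.castAdd 1 j)))
            (B (τ (Fin.castAdd 1 j)))) *
         qB BN (A (σ (Fin.natAdd (2 * k) 0))) (B (τ (Fin.natAdd (2 * k) 0))))) =
      (lam / 2) ^ k * DQ BN (2 * k) A B := by
    rw [DQ, Finset.mul_sum]
    refine Finset.sum_congr rfl fun σ _ => ?_
    rw [Finset.mul_sum]
    exact Finset.sum_congr rfl fun τ _ => by ring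
  have hc : ((Nat.factorial (2 * k) * Nat.factorial 1 * Nat.factorial (2 * k) *
      Nat.factorial 1 : ℕ) : ℝ)⁻¹ *
      ((Nat.factorial (2 * k) * Nat.factorial 1 : ℕ) : ℝ) ^ 2 = 1 := by
    have hp : ((2 * k).factorial : ℝ) ≠ 0 := Nat.cast_ne_zero.mpr (2 * k).factorial_ne_zero
    push_cast
    field_simp
  simp only [mul, ofBilin, pow2_apply lam R hR k, qB_def, sg_def]
  rw [key, merge, ← mul_assoc, hc, one_mul]

/-- the full antisymmetrized kernel for `g^m · (R^k · B)` -/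
def SF {n : ℕ} (BN : E n →ₗ[ℝ] E n →ₗ[ℝ] ℝ) (m k' : ℕ)
    (A B : Fin (m + (2 * k' + 1)) → Fin n) : ℝ :=
  ∑ σ : Equiv.Perm (Fin (m + (2 * k' + 1))), ∑ τ : Equiv.Perm (Fin (m + (2 * k' + 1))),
    sg σ * sg τ *
      ((∏ j : Fin m, dl (A (σ (Fin.castAdd (2 * k' + 1) j)))
          (B (τ (Fin.castAdd (2 * k' + 1) j)))) *
       ((∏ j : Fin (2 * k'), dl (A (σ (Fin.natAdd m (Fin.castAdd 1 j))))
          (B (τ (Fin.natAdd m (Fin.castAdd 1 j))))) *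
        qB BN (A (σ (Fin.natAdd m (Fin.natAdd (2 * k') 0))))
          (B (τ (Fin.natAdd m (Fin.natAdd (2 * k') 0))))))

lemma omega_apply (lam : ℝ) (R : DF n 2 2) (hR : R = (lam / 2) • pow1 (gDF n) 2)
    (BN : E n →ₗ[ℝ] E n →ₗ[ℝ] ℝ) (k m : ℕ)
    (A B : Fin (m + (2 * k + 1)) → Fin n) :
    mul (pow1 (gDF n) m) (mul (pow2 R k) (ofBilin BN))
        (fun i => e n (A i)) (fun j => e n (B j)) =
      (lam / 2) ^ k * SF BN m k A B := by
  have hDQexp : ∀ u v : Fin (2 * k + 1) → Fin n,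
      (lam / 2) ^ k * DQ BN (2 * k) u v =
      ∑ α : Equiv.Perm (Fin (2 * k + 1)), ∑ β : Equiv.Perm (Fin (2 * k + 1)),
        sg α * sg β *
          ((lam / 2) ^ k *
            ((∏ j : Fin (2 * k), dl (u (α (Fin.castAdd 1 j))) (v (β (Fin.castAdd 1 j)))) *
             qB BN (u (α (Fin.natAdd (2 * k) 0))) (v (β (Fin.natAdd (2 * k) 0))))) := by
    intro u v
    rw [DQ, Finset.mul_sum]
    refine Finset.sum_congr rfl fun α _ => ?_
    rw [Finset.mul_sum]
    exact Finset.sum_congr rfl fun β _ => by ring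
  have key : (∑ σ : Equiv.Perm (Fin (m + (2 * k + 1))),
      ∑ τ : Equiv.Perm (Fin (m + (2 * k + 1))),
      sg σ * sg τ *
        (Dg m (fun i => A (σ (Fin.castAdd (2 * k + 1) i)))
            (fun i => B (τ (Fin.castAdd (2 * k + 1) i))) *
         ((lam / 2) ^ k * DQ BN (2 * k) (fun i => A (σ (Fin.natAdd m i)))
            (fun i => B (τ (Fin.natAdd m i)))))) =
      ((Nat.factorial m * Nat.factorial (2 * k + 1) : ℕ) : ℝ) ^ 2 *
        ∑ σ : Equiv.Perm (Fin (m + (2 * k + 1))),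
        ∑ τ : Equiv.Perm (Fin (m + (2 * k + 1))),
          sg σ * sg τ *
            ((∏ j : Fin m, dl (A (σ (Fin.castAdd (2 * k + 1) j)))
                (B (τ (Fin.castAdd (2 * k + 1) j)))) *
             ((lam / 2) ^ k *
               ((∏ j : Fin (2 * k), dl (A (σ (Fin.natAdd m (Fin.castAdd 1 j))))
                  (B (τ (Fin.natAdd m (Fin.castAdd 1 j))))) *
                qB BN (A (σ (Fin.natAdd m (Fin.natAdd (2 * k) 0))))
                  (B (τ (Fin.natAdd m (Fin.natAdd (2 * k) 0))))))) :=
    main_absorb (a := m) (b := 2 * k + 1)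
      (fun u v => ∏ j, dl (u j) (v j)) (Dg m)
      (fun u v => (lam / 2) ^ k *
        ((∏ j : Fin (2 * k), dl (u (Fin.castAdd 1 j)) (v (Fin.castAdd 1 j))) *
         qB BN (u (Fin.natAdd (2 * k) 0)) (v (Fin.natAdd (2 * k) 0))))
      (fun u v => (lam / 2) ^ k * DQ BN (2 * k) u v)
      (fun u v => rfl) hDQexp A B
  have merge : (∑ σ : Equiv.Perm (Fin (m + (2 * k + 1))),
      ∑ τ : Equiv.Perm (Fin (m + (2 * k + 1))),
      sg σ * sg τ *
        ((∏ j : Fin m, dl (A (σ (Fin.castAdd (2 * k + 1) j)))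
            (B (τ (Fin.castAdd (2 * k + 1) j)))) *
         ((lam / 2) ^ k *
           ((∏ j : Fin (2 * k), dl (A (σ (Fin.natAdd m (Fin.castAdd 1 j))))
              (B (τ (Fin.natAdd m (Fin.castAdd 1 j))))) *
            qB BN (A (σ (Fin.natAdd m (Fin.natAdd (2 * k) 0))))
              (B (τ (Fin.natAdd m (Fin.natAdd (2 * k) 0)))))))) =
      (lam / 2) ^ k * SF BN m k A B := by
    rw [SF, Finset.mul_sum]
    refine Finset.sum_congr rfl fun σ _ => ?_
    rw [Finset.mul_sum]
    exact Finset.sum_congr rfl fun τ _ => by ring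
  have hc : ((Nat.factorial m * Nat.factorial (2 * k + 1) * Nat.factorial m *
      Nat.factorial (2 * k + 1) : ℕ) : ℝ)⁻¹ *
      ((Nat.factorial m * Nat.factorial (2 * k + 1) : ℕ) : ℝ) ^ 2 = 1 := by
    have hp : ((2 * k + 1).factorial : ℝ) ≠ 0 := Nat.cast_ne_zero.mpr (2 * k + 1).factorial_ne_zero
    have hm : (m.factorial : ℝ) ≠ 0 := Nat.cast_ne_zero.mpr m.factorial_ne_zero
    push_cast
    field_simp
  have step0 : mul (pow1 (gDF n) m) (mul (pow2 R k) (ofBilin BN))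
      (fun i => e n (A i)) (fun j => e n (B j)) =
    ((Nat.factorial m * Nat.factorial (2 * k + 1) * Nat.factorial m *
        Nat.factorial (2 * k + 1) : ℕ) : ℝ)⁻¹ *
      ∑ σ : Equiv.Perm (Fin (m + (2 * k + 1))), ∑ τ : Equiv.Perm (Fin (m + (2 * k + 1))),
        sg σ * sg τ *
          (pow1 (gDF n) m (fun i => e n (A (σ (Fin.castAdd (2 * k + 1) i))))
              (fun j => e n (B (τ (Fin.castAdd (2 * k + 1) j)))) *
           mul (pow2 R k) (ofBilin BN) (fun i => e n (A (σ (Fin.natAdd m i))))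
              (fun j => e n (B (τ (Fin.natAdd m j))))) := rfl
  rw [step0]
  simp only [pow1_apply, phi_apply lam R hR BN k]
  rw [key, merge, ← mul_assoc, hc, one_mul]

lemma SF_left (BN : E n →ₗ[ℝ] E n →ₗ[ℝ] ℝ) (m k' : ℕ)
    (A B : Fin (m + (2 * k' + 1)) → Fin n) (π π' : Equiv.Perm (Fin (m + (2 * k' + 1)))) :
    SF BN m k' (fun i => A (π i)) (fun i => B (π' i)) = sg π * sg π' * SF BN m k' A B := by
  set T : Equiv.Perm (Fin (m + (2 * k' + 1))) → Equiv.Perm (Fin (m + (2 * k' + 1))) → ℝ :=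
    fun μ ν =>
      (∏ j : Fin m, dl (A (μ (Fin.castAdd (2 * k' + 1) j)))
          (B (ν (Fin.castAdd (2 * k' + 1) j)))) *
       ((∏ j : Fin (2 * k'), dl (A (μ (Fin.natAdd m (Fin.castAdd 1 j))))
          (B (ν (Fin.natAdd m (Fin.castAdd 1 j))))) *
        qB BN (A (μ (Fin.natAdd m (Fin.natAdd (2 * k') 0))))
          (B (ν (Fin.natAdd m (Fin.natAdd (2 * k') 0))))) with hT
  have hstep1 : SF BN m k' (fun i => A (π i)) (fun i => B (π' i)) =
      ∑ σ : Equiv.Perm (Fin (m + (2 * k' + 1))), ∑ τ : Equiv.Perm (Fin (m + (2 * k' + 1))),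
        sg σ * sg τ * T (π * σ) (π' * τ) := by
    rw [SF]
    exact Finset.sum_congr rfl fun σ _ => Finset.sum_congr rfl fun τ _ => by
      simp only [hT, Equiv.Perm.mul_apply]
  have hstep2 : (∑ σ : Equiv.Perm (Fin (m + (2 * k' + 1))),
      ∑ τ : Equiv.Perm (Fin (m + (2 * k' + 1))),
        sg σ * sg τ * T (π * σ) (π' * τ)) =
      sg π * sg π' * ∑ σ : Equiv.Perm (Fin (m + (2 * k' + 1))),
        ∑ τ : Equiv.Perm (Fin (m + (2 * k' + 1))),
          sg (π * σ) * sg (π' * τ) * T (π * σ) (π' * τ) := by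
    rw [Finset.mul_sum]
    refine Finset.sum_congr rfl fun σ _ => ?_
    rw [Finset.mul_sum]
    refine Finset.sum_congr rfl fun τ _ => ?_
    rw [sg_mul, sg_mul]
    calc sg σ * sg τ * T (π * σ) (π' * τ)
        = (sg π * sg π) * ((sg π' * sg π') * (sg σ * sg τ * T (π * σ) (π' * τ))) := by
          rw [sg_self_mul, sg_self_mul]; ring
      _ = sg π * sg π' * (sg π * sg σ * (sg π' * sg τ) * T (π * σ) (π' * τ)) := by ring
  have hstep3 : (∑ σ : Equiv.Perm (Fin (m + (2 * k' + 1))),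
      ∑ τ : Equiv.Perm (Fin (m + (2 * k' + 1))),
        sg (π * σ) * sg (π' * τ) * T (π * σ) (π' * τ)) =
      ∑ σ : Equiv.Perm (Fin (m + (2 * k' + 1))),
        ∑ τ : Equiv.Perm (Fin (m + (2 * k' + 1))), sg σ * sg τ * T σ τ := by
    calc (∑ σ : Equiv.Perm (Fin (m + (2 * k' + 1))),
        ∑ τ : Equiv.Perm (Fin (m + (2 * k' + 1))),
          sg (π * σ) * sg (π' * τ) * T (π * σ) (π' * τ))
        = ∑ σ : Equiv.Perm (Fin (m + (2 * k' + 1))),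
            ∑ τ : Equiv.Perm (Fin (m + (2 * k' + 1))),
              sg (π * σ) * sg τ * T (π * σ) τ :=
          Finset.sum_congr rfl fun σ _ =>
            Equiv.sum_comp (Equiv.mulLeft π') (fun τ => sg (π * σ) * sg τ * T (π * σ) τ)
      _ = ∑ σ : Equiv.Perm (Fin (m + (2 * k' + 1))),
            ∑ τ : Equiv.Perm (Fin (m + (2 * k' + 1))), sg σ * sg τ * T σ τ :=
          Equiv.sum_comp (Equiv.mulLeft π) (fun σ =>
            ∑ τ : Equiv.Perm (Fin (m + (2 * k' + 1))), sg σ * sg τ * T σ τ)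
  rw [hstep1, hstep2, hstep3, SF]

lemma perm_eq_of_eq_off {β : Type*} (σ τ : Equiv.Perm β) (z : β)
    (h : ∀ w, w ≠ z → τ w = σ w) : τ = σ := by
  have hz : τ z = σ z := by
    by_contra hne
    set u := σ⁻¹ (τ z) with hu
    have hσu : σ u = τ z := Equiv.apply_symm_apply σ (τ z)
    have huz : u ≠ z := by
      intro hh
      apply hne
      rw [← hσu, hh]
    have : τ u = τ z := by rw [h u huz, hσu]
    exact huz (τ.injective this)
  refine Equiv.ext fun w => ?_
  by_cases hw : w = z
  · rw [hw]; exact hz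
  · exact h w hw

lemma sum_perm_eval {β : Type*} [Fintype β] [DecidableEq β] (z : β) (f : β → ℝ) :
    ∑ σ : Equiv.Perm β, f (σ z) = ((Fintype.card β - 1).factorial : ℝ) * ∑ s, f s := by
  classical
  have hpos : 0 < Fintype.card β := Fintype.card_pos_iff.mpr ⟨z⟩
  have hfib : ∀ s t : β,
      (Finset.univ.filter fun σ : Equiv.Perm β => σ z = s).card =
      (Finset.univ.filter fun σ : Equiv.Perm β => σ z = t).card := by
    intro s t
    refine Finset.card_bij' (fun σ _ => Equiv.swap s t * σ) (fun σ _ => Equiv.swap s t * σ)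
      ?_ ?_ ?_ ?_
    · intro σ hσ
      simp only [Finset.mem_filter, Finset.mem_univ, true_and] at hσ ⊢
      rw [Equiv.Perm.mul_apply, hσ, Equiv.swap_apply_left]
    · intro σ hσ
      simp only [Finset.mem_filter, Finset.mem_univ, true_and] at hσ ⊢
      rw [Equiv.Perm.mul_apply, hσ, Equiv.swap_apply_right]
    · intro σ _
      show Equiv.swap s t * (Equiv.swap s t * σ) = σ
      rw [← mul_assoc, Equiv.swap_mul_self, one_mul]
    · intro σ _
      show Equiv.swap s t * (Equiv.swap s t * σ) = σ
      rw [← mul_assoc, Equiv.swap_mul_self, one_mul]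
  have htot : ∑ s : β, (Finset.univ.filter fun σ : Equiv.Perm β => σ z = s).card =
      (Fintype.card β).factorial := by
    rw [← Finset.card_eq_sum_card_fiberwise
      (fun (σ : Equiv.Perm β) (_ : σ ∈ Finset.univ) => Finset.mem_univ (σ z))]
    rw [Finset.card_univ, Fintype.card_perm]
  have hcount : ∀ s : β,
      (Finset.univ.filter fun σ : Equiv.Perm β => σ z = s).card =
      (Fintype.card β - 1).factorial := by
    intro s
    have h1 : ∑ _t : β, (Finset.univ.filter fun σ : Equiv.Perm β => σ z = s).card =
        (Fintype.card β).factorial := by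
      rw [← htot]
      exact Finset.sum_congr rfl fun t _ => hfib s t
    rw [Finset.sum_const, Finset.card_univ, smul_eq_mul] at h1
    have h2 : Fintype.card β * (Fintype.card β - 1).factorial = (Fintype.card β).factorial :=
      Nat.mul_factorial_pred hpos.ne'
    exact Nat.eq_of_mul_eq_mul_left hpos (h1.trans h2.symm)
  calc ∑ σ : Equiv.Perm β, f (σ z)
      = ∑ s : β, ∑ σ ∈ Finset.univ.filter fun σ : Equiv.Perm β => σ z = s, f s :=
        (Finset.sum_fiberwise' Finset.univ (fun σ : Equiv.Perm β => σ z) f).symm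
    _ = ∑ s : β, ((Fintype.card β - 1).factorial : ℝ) * f s := by
        refine Finset.sum_congr rfl fun s _ => ?_
        rw [Finset.sum_const, hcount s, nsmul_eq_mul]
    _ = ((Fintype.card β - 1).factorial : ℝ) * ∑ s, f s := by
        rw [Finset.mul_sum]

lemma SF_diag (BN : E n →ₗ[ℝ] E n →ₗ[ℝ] ℝ) (m k' : ℕ) (h : m + (2 * k' + 1) = n) :
    SF BN m k' (fun i => Fin.cast h i) (fun i => Fin.cast h i) =
      ((n - 1).factorial : ℝ) * ∑ s : Fin n, qB BN s s := by
  set z : Fin (m + (2 * k' + 1)) := Fin.natAdd m (Fin.natAdd (2 * k') 0) with hz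
  have hzval : (z : ℕ) = m + 2 * k' := rfl
  have collapse : ∀ σ : Equiv.Perm (Fin (m + (2 * k' + 1))),
      (∑ τ : Equiv.Perm (Fin (m + (2 * k' + 1))),
        sg σ * sg τ *
          ((∏ j : Fin m, dl (Fin.cast h (σ (Fin.castAdd (2 * k' + 1) j)))
              (Fin.cast h (τ (Fin.castAdd (2 * k' + 1) j)))) *
           ((∏ j : Fin (2 * k'), dl (Fin.cast h (σ (Fin.natAdd m (Fin.castAdd 1 j))))
              (Fin.cast h (τ (Fin.natAdd m (Fin.castAdd 1 j))))) *
            qB BN (Fin.cast h (σ z)) (Fin.cast h (τ z))))) =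
      qB BN (Fin.cast h (σ z)) (Fin.cast h (σ z)) := by
    intro σ
    rw [Finset.sum_eq_single σ]
    · simp [dl_self, sg_self_mul]
    · intro τ _ hτ
      have hex : ∃ w, w ≠ z ∧ τ w ≠ σ w := by
        by_contra hcon
        push_neg at hcon
        exact hτ (perm_eq_of_eq_off σ τ z hcon)
      obtain ⟨w, hwz, hne⟩ := hex
      have hcast_ne : Fin.cast h (σ w) ≠ Fin.cast h (τ w) := by
        intro hcc
        exact hne (Fin.ext (congrArg Fin.val hcc).symm)
      rcases lt_or_ge (w : ℕ) m with hcase | hcase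
      · have hj : Fin.castAdd (2 * k' + 1) (⟨(w : ℕ), hcase⟩ : Fin m) = w := Fin.ext rfl
        have hzero : (∏ j : Fin m, dl (Fin.cast h (σ (Fin.castAdd (2 * k' + 1) j)))
            (Fin.cast h (τ (Fin.castAdd (2 * k' + 1) j)))) = 0 := by
          refine Finset.prod_eq_zero (Finset.mem_univ (⟨(w : ℕ), hcase⟩ : Fin m)) ?_
          rw [hj]
          exact dl_ne hcast_ne
        rw [hzero]
        ring
      · have hwne : (w : ℕ) ≠ m + 2 * k' := by
          intro hh
          exact hwz (Fin.ext (by rw [hh, hzval]))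
        have hlt2 : (w : ℕ) - m < 2 * k' := by
          have := w.isLt
          omega
        have hj : Fin.natAdd m (Fin.castAdd 1 (⟨(w : ℕ) - m, hlt2⟩ : Fin (2 * k'))) = w := by
          apply Fin.ext
          show m + ((w : ℕ) - m) = (w : ℕ)
          omega
        have hzero : (∏ j : Fin (2 * k'), dl (Fin.cast h (σ (Fin.natAdd m (Fin.castAdd 1 j))))
            (Fin.cast h (τ (Fin.natAdd m (Fin.castAdd 1 j))))) = 0 := by
          refine Finset.prod_eq_zero
            (Finset.mem_univ (⟨(w : ℕ) - m, hlt2⟩ : Fin (2 * k'))) ?_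
          rw [hj]
          exact dl_ne hcast_ne
        rw [hzero]
        ring
    · intro habs
      exact absurd (Finset.mem_univ σ) habs
  have hfin : ((Fintype.card (Fin (m + (2 * k' + 1))) - 1).factorial : ℝ) =
      ((n - 1).factorial : ℝ) := by
    rw [Fintype.card_fin]
    congr 2
    omega
  calc SF BN m k' (fun i => Fin.cast h i) (fun i => Fin.cast h i)
      = ∑ σ : Equiv.Perm (Fin (m + (2 * k' + 1))),
          qB BN (Fin.cast h (σ z)) (Fin.cast h (σ z)) := by
        rw [SF]
        exact Finset.sum_congr rfl fun σ _ => collapse σ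
    _ = ((Fintype.card (Fin (m + (2 * k' + 1))) - 1).factorial : ℝ) *
          ∑ s : Fin (m + (2 * k' + 1)), qB BN (Fin.cast h s) (Fin.cast h s) :=
        sum_perm_eval z (fun s => qB BN (Fin.cast h s) (Fin.cast h s))
    _ = ((n - 1).factorial : ℝ) * ∑ s : Fin n, qB BN s s := by
        rw [hfin]
        congr 1
        exact Equiv.sum_comp (finCongr h) (fun t => qB BN t t)

lemma epsSgn_empty {a : ℕ} (ha : a + n = n) (I : Fin a → Fin n) (K : Fin n → Fin n) :
    DF.epsSgn I K =
      if hb : Function.Bijective K then sg (Equiv.ofBijective K hb) else 0 := by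
  have ha0 : a = 0 := by omega
  rw [DF.epsSgn, dif_pos ha]
  have hfun : (fun i => Fin.append I K (Fin.cast ha.symm i)) = K := by
    funext i
    subst ha0
    rw [show Fin.cast ha.symm i = Fin.natAdd 0 i from Fin.ext (by simp)]
    exact Fin.append_right I K i
  simp only [hfun]
  rfl

lemma sum_dite_perm (F : (Fin n → Fin n) → ℝ) :
    (∑ K : Fin n → Fin n,
      (if hb : Function.Bijective K then sg (Equiv.ofBijective K hb) else 0) * F K) =
    ∑ κ : Equiv.Perm (Fin n), sg κ * F ⇑κ := by
  classical
  symm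
  calc ∑ κ : Equiv.Perm (Fin n), sg κ * F ⇑κ
      = ∑ κ : Equiv.Perm (Fin n), ∑ K : Fin n → Fin n,
          if ⇑κ = K then sg κ * F K else 0 := by
        refine Finset.sum_congr rfl fun κ _ => ?_
        rw [Finset.sum_ite_eq]
        simp
    _ = ∑ K : Fin n → Fin n, ∑ κ : Equiv.Perm (Fin n),
          if ⇑κ = K then sg κ * F K else 0 := Finset.sum_comm
    _ = ∑ K : Fin n → Fin n,
          (if hb : Function.Bijective K then sg (Equiv.ofBijective K hb) else 0) * F K := by
        refine Finset.sum_congr rfl fun K _ => ?_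
        by_cases hb : Function.Bijective K
        · rw [dif_pos hb]
          rw [Finset.sum_eq_single (Equiv.ofBijective K hb)]
          · rw [if_pos (show ⇑(Equiv.ofBijective K hb) = K from rfl)]
          · intro κ _ hκ
            rw [if_neg]
            intro hcoe
            exact hκ (Equiv.ext fun x => congrFun hcoe x)
          · intro habs
            exact absurd (Finset.mem_univ _) habs
        · rw [dif_neg hb, zero_mul]
          refine Finset.sum_eq_zero fun κ _ => ?_
          rw [if_neg]
          intro hcoe
          exact hb (hcoe ▸ κ.bijective)

end DF

/-- For a submanifold of constant curvature `λ ≠ 0` (so `R = (λ/2)g²`),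
`h_{2k+1}(N) = ((n−1)! λ^k / ((n−2k−1)! 2^k)) · c(B_N)`; consequently `h_{2k+1}(N) = 0`
iff `c(B_N) = 0`, i.e. `(2k)`-minimality is equivalent to ordinary minimality. -/
theorem DF.constantCurvature_higher_minimal {n k : ℕ} (hkn : 2 * k + 1 ≤ n)
    (lam : ℝ) (hlam : lam ≠ 0)
    (R : DF n 2 2) (hR : R = (lam / 2) • DF.pow1 (DF.gDF n) 2)
    (BN : E n →ₗ[ℝ] E n →ₗ[ℝ] ℝ) (hBN : ∀ x y, BN x y = BN y x) :
    DF.scal (DF.cDF (by omega) (by omega) (DF.star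
        (((n - 2 * k - 1).factorial : ℝ)⁻¹ •
          (DF.cDF (by omega) (by omega)
            (DF.mul (DF.pow1 (DF.gDF n) (n - 2 * k - 1))
              (DF.mul (DF.pow2 R k) (DF.ofBilin BN))) : DF n n n)))) =
      ((n - 1).factorial : ℝ) * lam ^ k / (((n - 2 * k - 1).factorial : ℝ) * 2 ^ k) *
        DF.scal (DF.contr 1 0 0
          (DF.cDF (by omega) (by omega) (DF.ofBilin BN) : DF n (1 + 0) (1 + 0))) ∧
    (DF.scal (DF.cDF (by omega) (by omega) (DF.star
        (((n - 2 * k - 1).factorial : ℝ)⁻¹ •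
          (DF.cDF (by omega) (by omega)
            (DF.mul (DF.pow1 (DF.gDF n) (n - 2 * k - 1))
              (DF.mul (DF.pow2 R k) (DF.ofBilin BN))) : DF n n n)))) = 0 ↔
      DF.scal (DF.contr 1 0 0
        (DF.cDF (by omega) (by omega) (DF.ofBilin BN) : DF n (1 + 0) (1 + 0))) = 0) := by
  classical
  have hpN : (n - 2 * k - 1) + (2 * k + 1) = n := by omega
  have hRHS : DF.scal (DF.contr 1 0 0
      (DF.cDF (by omega) (by omega) (DF.ofBilin BN) : DF n (1 + 0) (1 + 0))) =
      ∑ s : Fin n, DF.qB BN s s := by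
    have happ : ∀ (I : Fin 1 → Fin n) (x : Fin 0 → E n) (j : Fin (1 + 0)), (j : ℕ) = 0 →
        Fin.append (fun i => DF.e n (I i)) x j = DF.e n (I 0) := by
      intro I x j hj
      have hj' : j = Fin.castAdd 0 (0 : Fin 1) := Fin.ext hj
      rw [hj', Fin.append_left]
    have hterm : ∀ I : Fin 1 → Fin n,
        (DF.cDF (by omega) (by omega) (DF.ofBilin BN) : DF n (1 + 0) (1 + 0))
          (Fin.append (fun i => DF.e n (I i)) fun i => i.elim0)
          (Fin.append (fun i => DF.e n (I i)) fun i => i.elim0) = DF.qB BN (I 0) (I 0) := by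
      intro I
      simp only [DF.cDF, DF.ofBilin]
      rw [happ I _ _ rfl]
      rfl
    calc DF.scal (DF.contr 1 0 0
        (DF.cDF (by omega) (by omega) (DF.ofBilin BN) : DF n (1 + 0) (1 + 0)))
        = ∑ I : Fin 1 → Fin n, DF.qB BN (I 0) (I 0) := by
          simp only [DF.scal, DF.contr]
          exact Finset.sum_congr rfl fun I _ => hterm I
      _ = ∑ s : Fin n, DF.qB BN s s :=
          Equiv.sum_comp (Equiv.funUnique (Fin 1) (Fin n)) (fun s => DF.qB BN s s)
  have hL : DF.scal (DF.cDF (by omega) (by omega) (DF.star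
        (((n - 2 * k - 1).factorial : ℝ)⁻¹ •
          (DF.cDF (by omega) (by omega)
            (DF.mul (DF.pow1 (DF.gDF n) (n - 2 * k - 1))
              (DF.mul (DF.pow2 R k) (DF.ofBilin BN))) : DF n n n)))) =
      ((n - 1).factorial : ℝ) * lam ^ k / (((n - 2 * k - 1).factorial : ℝ) * 2 ^ k) *
        ∑ s : Fin n, DF.qB BN s s := by
    haveI hIsE : IsEmpty (Fin (n - n)) := ⟨fun i => absurd i.isLt (by omega)⟩
    have hpn0 : (n - n) + n = n := by omega
    simp only [DF.scal, DF.cDF, DF.star]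
    rw [show ((-1 : ℝ) ^ ((((n + n : ℕ)) : ℤ) * ((n : ℤ) - (n : ℤ) - (n : ℤ)))) = 1 from
      Even.neg_one_zpow ⟨(n : ℤ) * ((n : ℤ) - (n : ℤ) - (n : ℤ)), by push_cast; ring⟩, one_mul]
    simp only [Finset.univ_eq_empty, Finset.prod_empty, one_mul]
    rw [Fintype.sum_unique, Fintype.sum_unique]
    simp only [epsSgn_empty hpn0]
    simp only [mul_assoc]
    simp_rw [← Finset.mul_sum]
    simp_rw [sum_dite_perm]
    simp only [Pi.smul_apply, smul_eq_mul, DF.cDF]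
    have hOmega : ∀ κ ι : Equiv.Perm (Fin n),
        DF.mul (DF.pow1 (DF.gDF n) (n - 2 * k - 1)) (DF.mul (DF.pow2 R k) (DF.ofBilin BN))
          (fun i => DF.e n (κ (Fin.cast hpN i))) (fun j => DF.e n (ι (Fin.cast hpN j))) =
        (lam / 2) ^ k * (sg κ * sg ι *
          SF BN (n - 2 * k - 1) k (fun i => Fin.cast hpN i) (fun i => Fin.cast hpN i)) := by
      intro κ ι
      have h2 : SF BN (n - 2 * k - 1) k (fun i => κ (Fin.cast hpN i))
          (fun i => ι (Fin.cast hpN i)) =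
          sg κ * sg ι *
            SF BN (n - 2 * k - 1) k (fun i => Fin.cast hpN i) (fun i => Fin.cast hpN i) := by
        calc SF BN (n - 2 * k - 1) k (fun i => κ (Fin.cast hpN i)) (fun i => ι (Fin.cast hpN i))
            = sg ((finCongr hpN.symm).permCongr κ) * sg ((finCongr hpN.symm).permCongr ι) *
              SF BN (n - 2 * k - 1) k (fun i => Fin.cast hpN i) (fun i => Fin.cast hpN i) :=
            SF_left BN (n - 2 * k - 1) k (fun i => Fin.cast hpN i) (fun i => Fin.cast hpN i)
              ((finCongr hpN.symm).permCongr κ) ((finCongr hpN.symm).permCongr ι)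
          _ = sg κ * sg ι *
              SF BN (n - 2 * k - 1) k (fun i => Fin.cast hpN i) (fun i => Fin.cast hpN i) := by
            rw [sg_permCongr, sg_permCongr]
      exact (omega_apply lam R hR BN k (n - 2 * k - 1)
          (fun i => κ (Fin.cast hpN i)) (fun i => ι (Fin.cast hpN i))).trans (by rw [h2])
    simp_rw [hOmega]
    rw [SF_diag BN (n - 2 * k - 1) k hpN]
    have hterm : ∀ κ ι : Equiv.Perm (Fin n),
        sg ι * ((((n - 2 * k - 1).factorial : ℝ))⁻¹ *
          ((lam / 2) ^ k * (sg κ * sg ι *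
            (((n - 1).factorial : ℝ) * ∑ s : Fin n, qB BN s s)))) =
        sg κ * ((((n - 2 * k - 1).factorial : ℝ))⁻¹ *
          ((lam / 2) ^ k * (((n - 1).factorial : ℝ) * ∑ s : Fin n, qB BN s s))) := by
      intro κ ι
      calc sg ι * ((((n - 2 * k - 1).factorial : ℝ))⁻¹ *
            ((lam / 2) ^ k * (sg κ * sg ι *
              (((n - 1).factorial : ℝ) * ∑ s : Fin n, qB BN s s))))
          = (sg ι * sg ι) * (sg κ * ((((n - 2 * k - 1).factorial : ℝ))⁻¹ *
              ((lam / 2) ^ k * (((n - 1).factorial : ℝ) * ∑ s : Fin n, qB BN s s)))) := by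
            ring
        _ = sg κ * ((((n - 2 * k - 1).factorial : ℝ))⁻¹ *
              ((lam / 2) ^ k * (((n - 1).factorial : ℝ) * ∑ s : Fin n, qB BN s s))) := by
            rw [sg_self_mul, one_mul]
    have hinner : ∀ κ : Equiv.Perm (Fin n),
        (∑ ι : Equiv.Perm (Fin n),
          sg ι * ((((n - 2 * k - 1).factorial : ℝ))⁻¹ *
            ((lam / 2) ^ k * (sg κ * sg ι *
              (((n - 1).factorial : ℝ) * ∑ s : Fin n, qB BN s s))))) =
        (n.factorial : ℝ) * (sg κ * ((((n - 2 * k - 1).factorial : ℝ))⁻¹ *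
          ((lam / 2) ^ k * (((n - 1).factorial : ℝ) * ∑ s : Fin n, qB BN s s)))) := by
      intro κ
      calc (∑ ι : Equiv.Perm (Fin n),
            sg ι * ((((n - 2 * k - 1).factorial : ℝ))⁻¹ *
              ((lam / 2) ^ k * (sg κ * sg ι *
                (((n - 1).factorial : ℝ) * ∑ s : Fin n, qB BN s s)))))
          = ∑ _ι : Equiv.Perm (Fin n),
              sg κ * ((((n - 2 * k - 1).factorial : ℝ))⁻¹ *
                ((lam / 2) ^ k * (((n - 1).factorial : ℝ) * ∑ s : Fin n, qB BN s s))) :=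
            Finset.sum_congr rfl fun ι _ => hterm κ ι
        _ = (n.factorial : ℝ) * (sg κ * ((((n - 2 * k - 1).factorial : ℝ))⁻¹ *
              ((lam / 2) ^ k * (((n - 1).factorial : ℝ) * ∑ s : Fin n, qB BN s s)))) := by
            rw [Finset.sum_const, Finset.card_univ, Fintype.card_perm, Fintype.card_fin,
              nsmul_eq_mul]
    simp_rw [hinner]
    have houter : (∑ κ : Equiv.Perm (Fin n),
        sg κ * ((n.factorial : ℝ) * (sg κ * ((((n - 2 * k - 1).factorial : ℝ))⁻¹ *
          ((lam / 2) ^ k * (((n - 1).factorial : ℝ) * ∑ s : Fin n, qB BN s s)))))) =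
        (n.factorial : ℝ) * ((n.factorial : ℝ) * ((((n - 2 * k - 1).factorial : ℝ))⁻¹ *
          ((lam / 2) ^ k * (((n - 1).factorial : ℝ) * ∑ s : Fin n, qB BN s s)))) := by
      calc (∑ κ : Equiv.Perm (Fin n),
          sg κ * ((n.factorial : ℝ) * (sg κ * ((((n - 2 * k - 1).factorial : ℝ))⁻¹ *
            ((lam / 2) ^ k * (((n - 1).factorial : ℝ) * ∑ s : Fin n, qB BN s s))))))
          = ∑ _κ : Equiv.Perm (Fin n),
              (n.factorial : ℝ) * ((((n - 2 * k - 1).factorial : ℝ))⁻¹ *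
                ((lam / 2) ^ k * (((n - 1).factorial : ℝ) * ∑ s : Fin n, qB BN s s))) := by
            refine Finset.sum_congr rfl fun κ _ => ?_
            calc sg κ * ((n.factorial : ℝ) * (sg κ * ((((n - 2 * k - 1).factorial : ℝ))⁻¹ *
                  ((lam / 2) ^ k * (((n - 1).factorial : ℝ) * ∑ s : Fin n, qB BN s s)))))
                = (sg κ * sg κ) * ((n.factorial : ℝ) * ((((n - 2 * k - 1).factorial : ℝ))⁻¹ *
                    ((lam / 2) ^ k * (((n - 1).factorial : ℝ) * ∑ s : Fin n, qB BN s s)))) := by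
                  ring
              _ = (n.factorial : ℝ) * ((((n - 2 * k - 1).factorial : ℝ))⁻¹ *
                    ((lam / 2) ^ k * (((n - 1).factorial : ℝ) * ∑ s : Fin n, qB BN s s))) := by
                  rw [sg_self_mul, one_mul]
        _ = (n.factorial : ℝ) * ((n.factorial : ℝ) * ((((n - 2 * k - 1).factorial : ℝ))⁻¹ *
              ((lam / 2) ^ k * (((n - 1).factorial : ℝ) * ∑ s : Fin n, qB BN s s)))) := by
            rw [Finset.sum_const, Finset.card_univ, Fintype.card_perm, Fintype.card_fin,
              nsmul_eq_mul]
    rw [houter]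
    have hnf : (n.factorial : ℝ) ≠ 0 := Nat.cast_ne_zero.mpr n.factorial_ne_zero
    have hmf : ((n - 2 * k - 1).factorial : ℝ) ≠ 0 :=
      Nat.cast_ne_zero.mpr (n - 2 * k - 1).factorial_ne_zero
    have h2k : (2 : ℝ) ^ k ≠ 0 := pow_ne_zero _ two_ne_zero
    rw [div_pow]
    push_cast
    field_simp

  constructor
  · rw [hL, hRHS]
  · rw [hL, hRHS]
    have hC : ((n - 1).factorial : ℝ) * lam ^ k /
        (((n - 2 * k - 1).factorial : ℝ) * 2 ^ k) ≠ 0 := by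
      apply div_ne_zero
      · exact mul_ne_zero (Nat.cast_ne_zero.mpr (n - 1).factorial_ne_zero)
          (pow_ne_zero _ hlam)
      · exact mul_ne_zero (Nat.cast_ne_zero.mpr (n - 2 * k - 1).factorial_ne_zero)
          (pow_ne_zero _ two_ne_zero)
    constructor
    · intro h0
      rcases mul_eq_zero.mp h0 with h | h
      · exact absurd h hC
      · exact h
    · intro h0
      rw [h0, mul_zero]
end
end
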